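/- arXiv:1207.6614 — 4 statements merged into one kernel-verified Lean document; each statement's English description precedes it below -/
import Mathlib

section
/- Let $f_0$ be a probability density on $[0,\infty)$ with CDF $F_0$, and $\hat f_0$ the left derivative of the least concave majorant $\widehat F_0$ of $F_0$. Then for every increasing function $h$ on $[0,\infty)$ for which both integrals exist, $\int_0^\infty h(x)\,\hat f_0(x)\,dx \le \int_0^\infty h(x)\, f_0(x)\,dx$. -/
open Set MeasureTheory Filter Topology

/-- for increasing `h`, `∫ h fhat ≤ ∫ h f0`. -/
theorem grenander_KL_projection_increasing_functional
    (f0 F0 Fhat fhat : ℝ → ℝ)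
    (hf0nn : ∀ x, 0 ≤ f0 x)
    (hf0int : ∫ x in Ici (0:ℝ), f0 x = 1)
    (hF0 : ∀ x ≥ (0:ℝ), F0 x = ∫ u in (0:ℝ)..x, f0 u)
    -- `Fhat` is the least concave majorant of `F0` on `[0,∞)`
    (hconc : ConcaveOn ℝ (Ici 0) Fhat)
    (hmaj : ∀ x ≥ (0:ℝ), F0 x ≤ Fhat x)
    (hleast : ∀ G : ℝ → ℝ, ConcaveOn ℝ (Ici 0) G → (∀ x ≥ (0:ℝ), F0 x ≤ G x) →
      ∀ x ≥ (0:ℝ), Fhat x ≤ G x)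
    -- `fhat` is the left derivative of `Fhat`
    (hderiv : ∀ x > (0:ℝ), HasDerivWithinAt Fhat (fhat x) (Iio x) x) :
    ∀ h : ℝ → ℝ, MonotoneOn h (Ici 0) →
      IntegrableOn (fun x => h x * fhat x) (Ici 0) →
      IntegrableOn (fun x => h x * f0 x) (Ici 0) →
      ∫ x in Ici (0:ℝ), h x * fhat x ≤ ∫ x in Ici (0:ℝ), h x * f0 x := by
  intro h hmono hIhat hIf0
  -- ## basic integrability and F0 facts
  have hf0I : IntegrableOn f0 (Ici 0) := by
    by_contra hc
    rw [MeasureTheory.integral_undef hc] at hf0int; norm_num at hf0int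
  have hrestr : volume.restrict (Ici (0:ℝ)) = volume.restrict (Ioi (0:ℝ)) :=
    (Measure.restrict_congr_set Ioi_ae_eq_Ici).symm
  have hf0I' : IntegrableOn f0 (Ioi 0) := by rwa [IntegrableOn, ← hrestr]
  have hf0int' : ∫ x in Ioi (0:ℝ), f0 x = 1 := by
    rw [← hf0int]; exact (setIntegral_congr_set Ioi_ae_eq_Ici)
  have hF0' : ∀ x ≥ (0:ℝ), F0 x = ∫ u in Ioc 0 x, f0 u := by
    intro x hx
    rw [hF0 x hx, intervalIntegral.integral_of_le hx]
  have hf0nnae : ∀ (s : Set ℝ), 0 ≤ᵐ[volume.restrict s] f0 :=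
    fun s => Filter.Eventually.of_forall hf0nn
  have hF0nonneg : ∀ x ≥ (0:ℝ), 0 ≤ F0 x := by
    intro x hx
    rw [hF0' x hx]
    exact setIntegral_nonneg measurableSet_Ioc (fun u _ => hf0nn u)
  have hF0le1 : ∀ x ≥ (0:ℝ), F0 x ≤ 1 := by
    intro x hx
    rw [hF0' x hx, ← hf0int']
    exact setIntegral_mono_set hf0I' (hf0nnae _)
      (HasSubset.Subset.eventuallyLE Ioc_subset_Ioi_self)
  have hF0mono : ∀ ⦃x y : ℝ⦄, 0 ≤ x → x ≤ y → F0 x ≤ F0 y := by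
    intro x y hx hxy
    rw [hF0' x hx, hF0' y (hx.trans hxy)]
    exact setIntegral_mono_set (hf0I'.mono_set Ioc_subset_Ioi_self) (hf0nnae _)
      (HasSubset.Subset.eventuallyLE (Ioc_subset_Ioc_right hxy))
  -- ## Fhat basic facts
  have hFhat_nonneg : ∀ x ≥ (0:ℝ), 0 ≤ Fhat x :=
    fun x hx => (hF0nonneg x hx).trans (hmaj x hx)
  have hFhat_le1 : ∀ x ≥ (0:ℝ), Fhat x ≤ 1 :=
    hleast (fun _ => 1) (concaveOn_const 1 (convex_Ici 0)) hF0le1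
  have hFhatMono : ∀ ⦃x y : ℝ⦄, 0 ≤ x → x ≤ y → Fhat x ≤ Fhat y := by
    intro x y hx hxy
    rcases eq_or_lt_of_le hxy with rfl | hxy
    · exact le_rfl
    by_contra hlt
    push_neg at hlt
    have hs : slope Fhat x y < 0 := by
      rw [slope_def_field]
      apply div_neg_of_neg_of_pos (by linarith) (by linarith)
    set c : ℝ := (Fhat x + 1) / (-slope Fhat x y) with hc
    have hc0 : 0 < c := by
      apply div_pos (by linarith [hFhat_nonneg x hx]) (by linarith)
    set z : ℝ := max y (x + c) + 1 with hz
    have hyz : y < z := by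
      have := le_max_left y (x + c)
      simp only [hz]; linarith
    have hzc : x + c ≤ z := by
      have := le_max_right y (x + c)
      simp only [hz]; linarith
    have hymem : y ∈ Ici (0:ℝ) \ {x} := ⟨hx.trans hxy.le, by simp only [mem_singleton_iff]; exact hxy.ne'⟩
    have hzmem : z ∈ Ici (0:ℝ) \ {x} := ⟨by simp only [mem_Ici]; linarith, by
      simp only [mem_singleton_iff]; intro hzz; rw [hzz] at hyz; linarith⟩
    have hslope : slope Fhat x z ≤ slope Fhat x y :=
      hconc.slope_anti hx hymem hzmem hyz.le
    rw [slope_def_field] at hslope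
    have hzx : (0:ℝ) < z - x := by linarith
    have h1 : Fhat z - Fhat x ≤ slope Fhat x y * (z - x) := by
      rw [div_le_iff₀ hzx] at hslope; linarith [hslope]
    have h2 : slope Fhat x y * (z - x) ≤ slope Fhat x y * c := by
      apply mul_le_mul_of_nonpos_left (by linarith) hs.le
    have hsne : slope Fhat x y ≠ 0 := ne_of_lt hs
    have h3 : slope Fhat x y * c = -(Fhat x + 1) := by
      rw [hc]; field_simp
    have := hFhat_nonneg z (by linarith)
    nlinarith
  -- ## slope bounds for fhat
  have leftB : ∀ x y : ℝ, 0 ≤ x → x < y → fhat y ≤ slope Fhat x y := by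
    intro x y hx hxy
    exact hconc.le_slope_of_hasDerivWithinAt_Iio hx (mem_Ici.mpr (hx.trans hxy.le)) hxy
      (hderiv y (lt_of_le_of_lt hx hxy))
  have leftA : ∀ x y : ℝ, 0 < x → x < y → slope Fhat x y ≤ fhat x := by
    intro x y hx hxy
    have ht := (hasDerivWithinAt_iff_tendsto_slope' (notMem_Iio_self)).mp (hderiv x hx)
    apply ge_of_tendsto ht
    rw [eventually_nhdsWithin_iff]
    filter_upwards [eventually_gt_nhds hx] with u hu hu'
    exact hconc.slope_anti hx.le
      ⟨hu.le, by simpa using (ne_of_lt (mem_Iio.mp hu'))⟩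
      ⟨(hx.trans hxy).le, by simpa using hxy.ne'⟩ ((mem_Iio.mp hu').trans hxy).le
  have hfhat_nn : ∀ x : ℝ, 0 < x → 0 ≤ fhat x := by
    intro x hx
    have h1 := leftA x (x + 1) hx (by linarith)
    have h2 : 0 ≤ slope Fhat x (x + 1) := by
      rw [slope_def_field]
      apply div_nonneg ?_ (by linarith)
      have := hFhatMono hx.le (by linarith : x ≤ x + 1)
      linarith
    linarith
  have hfhat_anti : ∀ ⦃x y : ℝ⦄, 0 < x → x ≤ y → fhat y ≤ fhat x := by
    intro x y hx hxy
    rcases eq_or_lt_of_le hxy with rfl | hxy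
    · exact le_rfl
    exact (leftB x y hx.le hxy).trans (leftA x y hx hxy)
  -- ## continuity of Fhat on Ioi 0
  have hcont : ContinuousOn Fhat (Ioi 0) :=
    (hconc.subset Ioi_subset_Ici_self (convex_Ioi 0)).continuousOn isOpen_Ioi
  -- ## FTC for fhat on compact subintervals of (0, ∞)
  have hFTC : ∀ a b : ℝ, 0 < a → a ≤ b → ∫ u in a..b, fhat u = Fhat b - Fhat a := by
    intro a b ha hab
    have hmapsTo : MapsTo (fun y : ℝ => -y) (Icc (-b) (-a)) (Ioi 0) := by
      intro u hu
      simp only [mem_Icc] at hu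
      simp only [mem_Ioi]
      linarith [hu.2]
    have hmonoref : MonotoneOn (fun y : ℝ => fhat (-y)) (uIcc (-b) (-a)) := by
      intro u hu v hv huv
      rw [uIcc_of_le (by linarith)] at hu hv
      simp only [mem_Icc] at hu hv
      exact hfhat_anti (by linarith [hv.2] : (0:ℝ) < -v) (by linarith)
    have hii : IntervalIntegrable (fun y : ℝ => -fhat (-y)) volume (-b) (-a) :=
      hmonoref.intervalIntegrable.neg
    have key : ∫ y in (-b)..(-a), (-fhat (-y)) = Fhat (-(-a)) - Fhat (-(-b)) := by
      apply intervalIntegral.integral_eq_sub_of_hasDeriv_right_of_le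
        (f := fun y => Fhat (-y)) (f' := fun y => -fhat (-y)) (by linarith)
      · apply hcont.comp (continuous_neg.continuousOn)
        intro u hu
        exact hmapsTo hu
      · intro y hy
        simp only [mem_Ioo] at hy
        have hy' : 0 < -y := by linarith [hy.2]
        have hcomp := HasDerivWithinAt.comp (x := y) (hderiv (-y) hy')
          ((hasDerivAt_neg y).hasDerivWithinAt (s := Ioi y))
          (fun u hu => by simp only [mem_Iio]; simpa using neg_lt_neg (mem_Ioi.mp hu))
        simpa [Function.comp_def] using hcomp
      · exact hii
    rw [intervalIntegral.integral_neg, intervalIntegral.integral_comp_neg] at key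
    simp only [neg_neg] at key
    linarith [key]
  -- ## measurability of the indicator extension of fhat
  set fI : ℝ → ℝ := (Ioi (0:ℝ)).indicator fhat with hfIdef
  have hfImeas : Measurable fI := by
    apply measurable_of_tendsto_metrizable
      (f := fun n : ℕ => (Ioi (0:ℝ)).indicator (fun x => fhat (max x (1/(n+1)))))
    · intro n
      have hmono' : Antitone (fun x : ℝ => fhat (max x (1/(n+1)))) := by
        intro u v huv
        exact hfhat_anti (lt_of_lt_of_le (by positivity) (le_max_right _ _))
          (max_le_max huv le_rfl)
      exact hmono'.measurable.indicator measurableSet_Ioi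
    · rw [tendsto_pi_nhds]
      intro x
      rcases le_or_gt x 0 with hx | hx
      · have : ∀ n : ℕ, (Ioi (0:ℝ)).indicator (fun x => fhat (max x (1/(n+1)))) x = fI x := by
          intro n
          rw [indicator_of_notMem (by simpa using hx), hfIdef,
            indicator_of_notMem (by simpa using hx)]
        simp only [this]
        exact tendsto_const_nhds
      · obtain ⟨N, hN⟩ := exists_nat_one_div_lt hx
        apply Filter.Tendsto.congr' ?_ (tendsto_const_nhds (x := fI x))
        rw [Filter.EventuallyEq, eventually_atTop]
        refine ⟨N, fun n hn => ?_⟩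
        have h1n : 1 / ((n:ℝ) + 1) ≤ x := by
          calc 1 / ((n:ℝ) + 1) ≤ 1 / ((N:ℝ) + 1) := by
                apply one_div_le_one_div_of_le (by positivity)
                have : (N:ℝ) ≤ (n:ℝ) := Nat.cast_le.mpr hn
                linarith
            _ ≤ x := hN.le
        rw [hfIdef, indicator_of_mem (mem_Ioi.mpr hx), indicator_of_mem (mem_Ioi.mpr hx)]
        simp only [max_eq_left h1n]
  -- ## limit of Fhat at infinity
  have hF0top : Tendsto F0 atTop (𝓝 1) := by
    have h1 : Tendsto (fun x : ℝ => ∫ u in (0:ℝ)..x, f0 u) atTop (𝓝 (∫ u in Ioi (0:ℝ), f0 u)) :=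
      MeasureTheory.intervalIntegral_tendsto_integral_Ioi 0 hf0I' tendsto_id
    rw [hf0int'] at h1
    apply h1.congr'
    filter_upwards [eventually_ge_atTop (0:ℝ)] with x hx
    exact (hF0 x hx).symm
  have hFhattop : Tendsto Fhat atTop (𝓝 1) := by
    apply tendsto_of_tendsto_of_tendsto_of_le_of_le' hF0top tendsto_const_nhds
    · filter_upwards [eventually_ge_atTop (0:ℝ)] with x hx; exact hmaj x hx
    · filter_upwards [eventually_ge_atTop (0:ℝ)] with x hx; exact hFhat_le1 x hx
  -- ## F0 is small near 0
  have hF0zero : ∀ ε > (0:ℝ), ∃ δ > (0:ℝ), F0 δ ≤ ε := by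
    intro ε hε
    have hprim : ContinuousOn (fun x => ∫ u in Ioc 0 x, f0 u) (Icc (0:ℝ) 1) :=
      intervalIntegral.continuousOn_primitive (hf0I.mono_set Icc_subset_Ici_self)
    have hc : ContinuousWithinAt (fun x => ∫ u in Ioc 0 x, f0 u) (Icc (0:ℝ) 1) 0 :=
      hprim 0 (by simp)
    have hval : (∫ u in Ioc (0:ℝ) 0, f0 u) = 0 := by simp
    have hseq : Tendsto (fun n : ℕ => 1 / ((n:ℝ) + 1)) atTop (𝓝[Icc (0:ℝ) 1] 0) := by
      rw [tendsto_nhdsWithin_iff]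
      refine ⟨tendsto_one_div_add_atTop_nhds_zero_nat, Eventually.of_forall fun n => ?_⟩
      constructor
      · positivity
      · rw [div_le_one (by positivity)]; simp
    have hcomp := (hc.tendsto.comp hseq)
    rw [hval] at hcomp
    have := (hcomp.eventually_lt_const hε).exists
    obtain ⟨n, hn⟩ := this
    refine ⟨1 / ((n:ℝ) + 1), by positivity, ?_⟩
    rw [hF0' _ (by positivity)]
    exact le_of_lt hn
  -- ## Fhat is small near 0
  have hFhat0 : ∀ ε > (0:ℝ), ∃ δ > (0:ℝ), ∀ x, 0 ≤ x → x ≤ δ → Fhat x ≤ ε := by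
    intro ε hε
    obtain ⟨δ, hδ, hδF⟩ := hF0zero (ε/2) (by linarith)
    have hG : ConcaveOn ℝ (Ici (0:ℝ)) (fun x => ε/2 + (1/δ) * x) := by
      apply (concaveOn_const (ε/2) (convex_Ici 0)).add
      have h1 : ConcaveOn ℝ (Ici (0:ℝ)) (fun x : ℝ => x) :=
        (LinearMap.id (R := ℝ) (M := ℝ)).concaveOn (convex_Ici 0)
      exact h1.smul (by positivity)
    have hGmaj : ∀ x ≥ (0:ℝ), F0 x ≤ ε/2 + (1/δ) * x := by
      intro x hx
      rcases le_or_gt x δ with hxd | hxd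
      · have := hF0mono hx hxd
        have hxδ : 0 ≤ (1/δ) * x := by positivity
        linarith
      · have h1 : (1:ℝ) ≤ (1/δ) * x := by
          rw [div_mul_eq_mul_div, le_div_iff₀ hδ, one_mul]
          linarith
        have := hF0le1 x hx
        linarith
    have hlem := hleast _ hG hGmaj
    refine ⟨min δ (δ * ε / 2), by positivity, ?_⟩
    intro x hx hxle
    have h1 := hlem x hx
    have h2 : (1/δ) * x ≤ ε/2 := by
      have hxle2 : x ≤ δ * ε / 2 := le_trans hxle (min_le_right _ _)
      rw [div_mul_eq_mul_div, div_le_iff₀ hδ]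
      calc 1 * x = x := one_mul x
        _ ≤ δ * ε / 2 := hxle2
        _ = ε / 2 * δ := by ring
    linarith
  have hFhatseq : Tendsto (fun n : ℕ => Fhat (1 / ((n:ℝ) + 1))) atTop (𝓝 0) := by
    rw [Metric.tendsto_atTop]
    intro ε hε
    obtain ⟨δ, hδ, hδF⟩ := hFhat0 (ε/2) (by linarith)
    obtain ⟨N, hN⟩ := exists_nat_one_div_lt hδ
    refine ⟨N, fun n hn => ?_⟩
    have h1n : 1 / ((n:ℝ) + 1) ≤ δ := by
      calc 1 / ((n:ℝ) + 1) ≤ 1 / ((N:ℝ) + 1) := by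
            apply one_div_le_one_div_of_le (by positivity)
            have : (N:ℝ) ≤ (n:ℝ) := Nat.cast_le.mpr hn
            linarith
        _ ≤ δ := hN.le
    have h2 := hδF (1 / ((n:ℝ) + 1)) (by positivity) h1n
    have h3 := hFhat_nonneg (1 / ((n:ℝ) + 1)) (by positivity)
    rw [Real.dist_eq]
    rw [sub_zero, abs_of_nonneg h3]
    linarith
  -- ## the measures
  set μ0 : Measure ℝ := volume.restrict (Ioi 0) with hμ0def
  set DH : ℝ → ENNReal := fun x => ENNReal.ofReal (fI x) with hDHdef
  have hDHmeas : Measurable DH := ENNReal.measurable_ofReal.comp hfImeas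
  set νhat : Measure ℝ := μ0.withDensity DH with hνhatdef
  have hfInn : ∀ x, 0 ≤ fI x := by
    intro x
    rw [hfIdef]
    rcases le_or_gt x 0 with hx | hx
    · rw [indicator_of_notMem (by simpa using hx)]
    · rw [indicator_of_mem (mem_Ioi.mpr hx)]; exact hfhat_nn x hx
  -- νhat of Ioc a b for 0 < a ≤ b
  have hν1 : ∀ a b : ℝ, 0 < a → a ≤ b → νhat (Ioc a b) = ENNReal.ofReal (Fhat b - Fhat a) := by
    intro a b ha hab
    rw [hνhatdef, withDensity_apply DH measurableSet_Ioc, hμ0def,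
      Measure.restrict_restrict measurableSet_Ioc,
      show Ioc a b ∩ Ioi (0:ℝ) = Ioc a b from
        inter_eq_left.mpr (fun x hx => mem_Ioi.mpr (lt_trans ha (mem_Ioc.mp hx).1))]
    have hfhatII : IntegrableOn fhat (Ioc a b) := by
      have hanti : AntitoneOn fhat (uIcc a b) := by
        intro u hu v hv huv
        rw [uIcc_of_le hab] at hu hv
        exact hfhat_anti (lt_of_lt_of_le ha hu.1) huv
      exact (intervalIntegrable_iff_integrableOn_Ioc_of_le hab).mp hanti.intervalIntegrable
    have heq : ∫⁻ x in Ioc a b, DH x = ∫⁻ x in Ioc a b, ENNReal.ofReal (fhat x) := by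
      apply setLIntegral_congr_fun measurableSet_Ioc
      intro x hx
      simp only [hDHdef, hfIdef]
      rw [indicator_of_mem (mem_Ioi.mpr (lt_trans ha (mem_Ioc.mp hx).1))]
    have hnn : 0 ≤ᵐ[volume.restrict (Ioc a b)] fhat :=
      ae_restrict_of_forall_mem measurableSet_Ioc (fun x hx => hfhat_nn x (lt_trans ha hx.1))
    rw [heq, ← ofReal_integral_eq_lintegral_ofReal hfhatII hnn]
    congr 1
    rw [← intervalIntegral.integral_of_le hab]
    exact hFTC a b ha hab
  have hν2 : ∀ a : ℝ, 0 < a → νhat (Ioi a) = ENNReal.ofReal (1 - Fhat a) := by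
    intro a ha
    have hU : Ioi a = ⋃ n : ℕ, Ioc a (a + n) := by
      ext x
      simp only [mem_Ioi, mem_iUnion, mem_Ioc]
      constructor
      · intro hx
        obtain ⟨n, hn⟩ := exists_nat_ge (x - a)
        exact ⟨n, hx, by linarith⟩
      · rintro ⟨n, h1, -⟩
        exact h1
    have hmonoS : Monotone (fun n : ℕ => Ioc a (a + (n:ℝ))) := by
      intro m n hmn
      apply Ioc_subset_Ioc_right
      have : (m:ℝ) ≤ n := Nat.cast_le.mpr hmn
      linarith
    have ht := tendsto_measure_iUnion_atTop (μ := νhat) hmonoS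
    have ht2 : Tendsto (fun n : ℕ => νhat (Ioc a (a + (n:ℝ)))) atTop
        (𝓝 (ENNReal.ofReal (1 - Fhat a))) := by
      have heq : ∀ n : ℕ, νhat (Ioc a (a + (n:ℝ))) = ENNReal.ofReal (Fhat (a + (n:ℝ)) - Fhat a) :=
        fun n => hν1 a (a + n) ha (by linarith [Nat.cast_nonneg (α := ℝ) n])
      simp only [heq]
      apply ENNReal.tendsto_ofReal
      have h3 : Tendsto (fun n : ℕ => Fhat (a + (n:ℝ))) atTop (𝓝 1) :=
        hFhattop.comp (tendsto_atTop_add_const_left _ a tendsto_natCast_atTop_atTop)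
      exact h3.sub_const (Fhat a)
    have := tendsto_nhds_unique ht ht2
    rwa [← hU] at this
  have hν3 : νhat (Ioi 0) = 1 := by
    have hU : Ioi (0:ℝ) = ⋃ n : ℕ, Ioi (1/((n:ℝ)+1)) := by
      ext x
      simp only [mem_Ioi, mem_iUnion]
      constructor
      · intro hx
        obtain ⟨n, hn⟩ := exists_nat_one_div_lt hx
        exact ⟨n, hn⟩
      · rintro ⟨n, hn⟩
        exact lt_trans (by positivity) hn
    have hmonoS : Monotone (fun n : ℕ => Ioi (1/((n:ℝ)+1))) := by
      intro m n hmn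
      apply Ioi_subset_Ioi
      apply one_div_le_one_div_of_le (by positivity)
      have : (m:ℝ) ≤ n := Nat.cast_le.mpr hmn
      linarith
    have ht := tendsto_measure_iUnion_atTop (μ := νhat) hmonoS
    have ht2 : Tendsto (fun n : ℕ => νhat (Ioi (1/((n:ℝ)+1)))) atTop (𝓝 1) := by
      have heq : ∀ n : ℕ, νhat (Ioi (1/((n:ℝ)+1))) =
          ENNReal.ofReal (1 - Fhat (1/((n:ℝ)+1))) :=
        fun n => hν2 _ (by positivity)
      simp only [heq]
      have h3 : Tendsto (fun n : ℕ => 1 - Fhat (1/((n:ℝ)+1))) atTop (𝓝 1) := by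
        have := (tendsto_const_nhds (x := (1:ℝ)) (f := atTop (α := ℕ))).sub hFhatseq
        simpa using this
      have h4 := ENNReal.tendsto_ofReal h3
      rwa [ENNReal.ofReal_one] at h4
    have := tendsto_nhds_unique ht ht2
    rwa [← hU] at this
  have hν4 : ∀ c : ℝ, νhat {c} = 0 := by
    intro c
    rw [hνhatdef, withDensity_apply _ (measurableSet_singleton c), hμ0def,
      Measure.restrict_restrict (measurableSet_singleton c)]
    have h0 : volume ({c} ∩ Ioi 0 : Set ℝ) = 0 :=
      measure_mono_null inter_subset_left Real.volume_singleton
    rw [Measure.restrict_eq_zero.mpr h0, lintegral_zero_measure]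
  have hνuniv : νhat univ = 1 := by
    rw [hνhatdef, withDensity_apply _ MeasurableSet.univ, Measure.restrict_univ, hμ0def,
      ← Measure.restrict_restrict_of_subset (subset_refl (Ioi 0)), ← hμ0def,
      ← withDensity_apply _ measurableSet_Ioi, ← hνhatdef]
    exact hν3
  -- the measure for f0
  set Dν : ℝ → ENNReal := fun x => ENNReal.ofReal (f0 x) with hDνdef
  set ν : Measure ℝ := μ0.withDensity Dν with hνdef
  have hνIoi : ∀ c : ℝ, 0 ≤ c → ν (Ioi c) = ENNReal.ofReal (1 - F0 c) := by
    intro c hc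
    rw [hνdef, withDensity_apply _ measurableSet_Ioi, hμ0def,
      Measure.restrict_restrict measurableSet_Ioi,
      show Ioi c ∩ Ioi (0:ℝ) = Ioi c from inter_eq_left.mpr (Ioi_subset_Ioi hc)]
    have hint : IntegrableOn f0 (Ioi c) := hf0I'.mono_set (Ioi_subset_Ioi hc)
    have heq : ∫⁻ x in Ioi c, Dν x = ∫⁻ x in Ioi c, ENNReal.ofReal (f0 x) := rfl
    rw [heq, ← ofReal_integral_eq_lintegral_ofReal hint (Eventually.of_forall hf0nn)]
    congr 1
    have hdisj : Disjoint (Ioc 0 c) (Ioi c) := Ioc_disjoint_Ioi le_rfl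
    have hsplit := setIntegral_union (μ := volume) (f := f0) hdisj measurableSet_Ioi
      (hf0I'.mono_set Ioc_subset_Ioi_self) hint
    rw [Ioc_union_Ioi_eq_Ioi hc] at hsplit
    rw [hf0int'] at hsplit
    rw [hF0' c hc]
    linarith
  have hcomp : ∀ c : ℝ, 0 ≤ c → νhat (Ioi c) ≤ ν (Ioi c) := by
    intro c hc
    rcases eq_or_lt_of_le hc with rfl | hc'
    · rw [hν3, hνIoi 0 le_rfl]
      have hF00 : F0 0 = 0 := by rw [hF0 0 le_rfl, intervalIntegral.integral_same]
      rw [hF00, sub_zero, ENNReal.ofReal_one]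
    · rw [hν2 c hc', hνIoi c hc]
      exact ENNReal.ofReal_le_ofReal (by linarith [hmaj c hc])
  -- ## the increasing nonnegative function g
  set g : ℝ → ℝ := fun x => h (max x 0) - h 0 with hgdef
  have hgmono : Monotone g := by
    intro u v huv
    have := hmono (le_max_right u 0) (le_max_right v 0) (max_le_max huv le_rfl)
    simpa [hgdef] using this
  have hg0 : ∀ x, 0 ≤ g x := by
    intro x
    have := hmono (le_refl (0:ℝ)) (le_max_right x 0) (le_max_right x 0)
    simpa [hgdef] using this
  have hgmeas : Measurable g := by
    have h1 : Monotone (fun x : ℝ => h (max x 0)) := by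
      intro u v huv
      exact hmono (le_max_right u 0) (le_max_right v 0) (max_le_max huv le_rfl)
    exact h1.measurable.sub measurable_const
  have hgIoi : ∀ x : ℝ, 0 < x → g x = h x - h 0 := by
    intro x hx
    rw [hgdef]
    simp only [max_eq_left hx.le]
  -- ## layer cake and pointwise comparison
  have hlc1 : ∫⁻ x, ENNReal.ofReal (g x) ∂νhat = ∫⁻ t in Ioi 0, νhat {a | t < g a} :=
    lintegral_eq_lintegral_meas_lt νhat (Eventually.of_forall hg0) hgmeas.aemeasurable
  have hlc2 : ∫⁻ x, ENNReal.ofReal (g x) ∂ν = ∫⁻ t in Ioi 0, ν {a | t < g a} :=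
    lintegral_eq_lintegral_meas_lt ν (Eventually.of_forall hg0) hgmeas.aemeasurable
  have hts : ∀ t : ℝ, 0 < t → νhat {a | t < g a} ≤ ν {a | t < g a} := by
    intro t ht
    set S : Set ℝ := {a | t < g a} with hSdef
    rcases S.eq_empty_or_nonempty with hS | hS
    · rw [hS]; simp
    have hSpos : S ⊆ Ioi 0 := by
      intro a ha
      rw [hSdef, mem_setOf_eq] at ha
      by_contra hc
      simp only [mem_Ioi, not_lt] at hc
      have : g a = 0 := by rw [hgdef]; simp [max_eq_right hc]
      rw [this] at ha
      linarith
    have hbdd : BddBelow S := ⟨0, fun a ha => (hSpos ha).le⟩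
    set c : ℝ := sInf S with hcdef
    have hc0 : 0 ≤ c := le_csInf hS (fun b hb => (hSpos hb).le)
    have hIoiS : Ioi c ⊆ S := by
      intro x hx
      obtain ⟨a, haS, hax⟩ := (csInf_lt_iff hbdd hS).mp (mem_Ioi.mp hx)
      rw [hSdef, mem_setOf_eq] at haS ⊢
      exact lt_of_lt_of_le haS (hgmono hax.le)
    have hSIci : S ⊆ Ici c := fun a ha => csInf_le hbdd ha
    calc νhat S ≤ νhat (Ici c) := measure_mono hSIci
      _ = νhat (Ioi c ∪ {c}) := by rw [Ioi_union_left]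
      _ ≤ νhat (Ioi c) + νhat {c} := measure_union_le _ _
      _ = νhat (Ioi c) := by rw [hν4 c, add_zero]
      _ ≤ ν (Ioi c) := hcomp c hc0
      _ ≤ ν S := measure_mono hIoiS
  -- ## comparison of lintegrals
  have hlcmp : ∫⁻ x, ENNReal.ofReal (g x) ∂νhat ≤ ∫⁻ x, ENNReal.ofReal (g x) ∂ν := by
    rw [hlc1, hlc2]
    apply lintegral_mono_ae
    exact ae_restrict_of_forall_mem measurableSet_Ioi (fun t ht => hts t ht)
  -- ## integrability of fI and fhat over μ0, and total mass
  have hfIint : Integrable fI μ0 := by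
    constructor
    · exact hfImeas.aestronglyMeasurable
    · rw [hasFiniteIntegral_iff_norm]
      have heq : ∫⁻ a, ENNReal.ofReal ‖fI a‖ ∂μ0 = νhat univ := by
        rw [hνhatdef, withDensity_apply _ MeasurableSet.univ, Measure.restrict_univ]
        apply lintegral_congr
        intro a
        rw [Real.norm_of_nonneg (hfInn a)]
      rw [heq, hνuniv]
      exact ENNReal.one_lt_top
  have hfhatae : fI =ᵐ[μ0] fhat := by
    rw [hμ0def]
    apply ae_restrict_of_forall_mem measurableSet_Ioi
    intro x hx
    rw [hfIdef]
    exact indicator_of_mem hx _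
  have hfhatint : Integrable fhat μ0 := hfIint.congr hfhatae
  have hfhatnnae : 0 ≤ᵐ[μ0] fhat := by
    rw [hμ0def]
    exact ae_restrict_of_forall_mem measurableSet_Ioi (fun x hx => hfhat_nn x hx)
  have hfhatint1 : ∫ x, fhat x ∂μ0 = 1 := by
    have h1 : ENNReal.ofReal (∫ x, fhat x ∂μ0) = 1 := by
      rw [ofReal_integral_eq_lintegral_ofReal hfhatint hfhatnnae]
      have h2 : ∫⁻ x, ENNReal.ofReal (fhat x) ∂μ0 = ∫⁻ x, DH x ∂μ0 :=
        lintegral_congr_ae ((hfhatae.symm).fun_comp ENNReal.ofReal)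
      have h3 : ∫⁻ x, DH x ∂μ0 = νhat univ := by
        rw [hνhatdef, withDensity_apply _ MeasurableSet.univ, Measure.restrict_univ]
      rw [h2, h3, hνuniv]
    exact ENNReal.ofReal_eq_one.mp h1
  -- ## rewriting the two target integrals
  have hIhat' : Integrable (fun x => h x * fhat x) μ0 := by
    rw [hμ0def]
    exact hIhat.mono_set Ioi_subset_Ici_self
  have hIf0' : Integrable (fun x => h x * f0 x) μ0 := by
    rw [hμ0def]
    exact hIf0.mono_set Ioi_subset_Ici_self
  have hgfIae : (fun x => g x * fI x) =ᵐ[μ0] (fun x => h x * fhat x - h 0 * fhat x) := by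
    rw [hμ0def]
    apply ae_restrict_of_forall_mem measurableSet_Ioi
    intro x hx
    show g x * fI x = h x * fhat x - h 0 * fhat x
    rw [hgIoi x hx, hfIdef, indicator_of_mem hx]
    ring
  have hgfIint : Integrable (fun x => g x * fI x) μ0 :=
    (Integrable.sub hIhat' (hfhatint.const_mul (h 0))).congr hgfIae.symm
  have hgf0ae : (fun x => g x * f0 x) =ᵐ[μ0] (fun x => h x * f0 x - h 0 * f0 x) := by
    rw [hμ0def]
    apply ae_restrict_of_forall_mem measurableSet_Ioi
    intro x hx
    show g x * f0 x = h x * f0 x - h 0 * f0 x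
    rw [hgIoi x hx]
    ring
  have hf0intμ0 : Integrable f0 μ0 := hf0I'
  have hgf0int : Integrable (fun x => g x * f0 x) μ0 :=
    (Integrable.sub hIf0' (hf0intμ0.const_mul (h 0))).congr hgf0ae.symm
  -- ## identify the lintegrals
  have hkey1 : ∫⁻ x, ENNReal.ofReal (g x) ∂νhat = ENNReal.ofReal (∫ x, g x * fI x ∂μ0) := by
    rw [hνhatdef, lintegral_withDensity_eq_lintegral_mul μ0 hDHmeas
      (Measurable.ennreal_ofReal hgmeas : Measurable fun x => ENNReal.ofReal (g x))]
    rw [ofReal_integral_eq_lintegral_ofReal hgfIint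
      (Eventually.of_forall (fun x => mul_nonneg (hg0 x) (hfInn x)))]
    apply lintegral_congr
    intro x
    simp only [Pi.mul_apply, hDHdef, Function.comp]
    rw [← ENNReal.ofReal_mul (hfInn x), mul_comm]
  have hDνaem : AEMeasurable Dν μ0 :=
    ENNReal.measurable_ofReal.comp_aemeasurable hf0I'.aestronglyMeasurable.aemeasurable
  have hkey2 : ∫⁻ x, ENNReal.ofReal (g x) ∂ν = ENNReal.ofReal (∫ x, g x * f0 x ∂μ0) := by
    rw [hνdef, lintegral_withDensity_eq_lintegral_mul₀ hDνaem
      ((Measurable.ennreal_ofReal hgmeas : Measurable fun x => ENNReal.ofReal (g x)).aemeasurable)]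
    rw [ofReal_integral_eq_lintegral_ofReal hgf0int
      (Eventually.of_forall (fun x => mul_nonneg (hg0 x) (hf0nn x)))]
    apply lintegral_congr
    intro x
    simp only [Pi.mul_apply, hDνdef, Function.comp]
    rw [← ENNReal.ofReal_mul (hf0nn x), mul_comm]
  -- ## final assembly
  have hfin1 : ∫ x in Ici (0:ℝ), h x * fhat x = (∫ x, g x * fI x ∂μ0) + h 0 := by
    rw [show (volume.restrict (Ici (0:ℝ))) = μ0 from hrestr]
    have hae : (fun x => h x * fhat x) =ᵐ[μ0] (fun x => g x * fI x + h 0 * fhat x) := by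
      filter_upwards [hgfIae] with x hx
      rw [hx]
      ring
    rw [integral_congr_ae hae, integral_add hgfIint (hfhatint.const_mul (h 0)),
      integral_const_mul, hfhatint1, mul_one]
  have hfin2 : ∫ x in Ici (0:ℝ), h x * f0 x = (∫ x, g x * f0 x ∂μ0) + h 0 := by
    rw [show (volume.restrict (Ici (0:ℝ))) = μ0 from hrestr]
    have hae : (fun x => h x * f0 x) =ᵐ[μ0] (fun x => g x * f0 x + h 0 * f0 x) := by
      filter_upwards [hgf0ae] with x hx
      rw [hx]
      ring
    rw [integral_congr_ae hae, integral_add hgf0int (hf0intμ0.const_mul (h 0)),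
      integral_const_mul, hf0int', mul_one]
  have hfinal := hlcmp
  rw [hkey1, hkey2] at hfinal
  have hle : ∫ x, g x * fI x ∂μ0 ≤ ∫ x, g x * f0 x ∂μ0 :=
    (ENNReal.ofReal_le_ofReal_iff
      (integral_nonneg (fun x => mul_nonneg (hg0 x) (hf0nn x)))).mp hfinal
  rw [hfin1, hfin2]
  linarith
end

section
/- (Marshall's lemma) Let $F_0$ be a continuous CDF on $[0,\infty)$ with least concave majorant $\widehat F_0$. Then for any concave CDF $G_0$ on $[0,\infty)$ (i.e., the CDF of a decreasing density), $\sup_{x\ge 0}|\widehat F_0(x) - G_0(x)| \le \sup_{x\ge 0}|F_0(x) - G_0(x)|$. -/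
open Set MeasureTheory

/-- Marshall's lemma. -/
theorem marshall_lemma
    (F0 Fhat G0 g0 : ℝ → ℝ)
    (hF0cont : Continuous F0)
    -- `Fhat` is the least concave majorant of `F0` on `[0,∞)`
    (hconc : ConcaveOn ℝ (Ici 0) Fhat)
    (hmaj : ∀ x ≥ (0:ℝ), F0 x ≤ Fhat x)
    (hleast : ∀ G : ℝ → ℝ, ConcaveOn ℝ (Ici 0) G → (∀ x ≥ (0:ℝ), F0 x ≤ G x) →
      ∀ x ≥ (0:ℝ), Fhat x ≤ G x)
    -- `G0` is the CDF of a nonincreasing density `g0`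
    (hg0 : AntitoneOn g0 (Ici 0)) (hg0nn : ∀ x, 0 ≤ g0 x)
    (hg0int : ∫ x in Ici (0:ℝ), g0 x = 1)
    (hG0 : ∀ x ≥ (0:ℝ), G0 x = ∫ t in (0:ℝ)..x, g0 t) :
    ∀ C : ℝ, (∀ x ≥ (0:ℝ), |F0 x - G0 x| ≤ C) → ∀ x ≥ (0:ℝ), |Fhat x - G0 x| ≤ C := by
  intro C hC x hx
  -- integrability of g0 on subintervals of [0,∞)
  have hint : ∀ a b : ℝ, 0 ≤ a → 0 ≤ b → IntervalIntegrable g0 volume a b := by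
    intro a b ha hb
    exact (hg0.mono (fun t ht => le_trans (le_min ha hb) ht.1)).intervalIntegrable
  -- concavity of the primitive on [0,∞)
  have hGconc : ConcaveOn ℝ (Ici (0:ℝ)) (fun y => ∫ t in (0:ℝ)..y, g0 t) := by
    refine concaveOn_of_slope_anti_adjacent (convex_Ici 0) ?_
    intro a b c ha hc hab hbc
    have ha' : (0:ℝ) ≤ a := ha
    have hb' : (0:ℝ) ≤ b := le_of_lt (lt_of_le_of_lt ha' hab)
    have hc' : (0:ℝ) ≤ c := le_of_lt (lt_trans (lt_of_le_of_lt ha' hab) hbc)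
    have h1 : (∫ t in (0:ℝ)..b, g0 t) - ∫ t in (0:ℝ)..a, g0 t = ∫ t in a..b, g0 t :=
      intervalIntegral.integral_interval_sub_left (hint 0 b le_rfl hb') (hint 0 a le_rfl ha')
    have h2 : (∫ t in (0:ℝ)..c, g0 t) - ∫ t in (0:ℝ)..b, g0 t = ∫ t in b..c, g0 t :=
      intervalIntegral.integral_interval_sub_left (hint 0 c le_rfl hc') (hint 0 b le_rfl hb')
    have hlb : (b - a) * g0 b ≤ ∫ t in a..b, g0 t := by
      have := intervalIntegral.integral_mono_on (le_of_lt hab)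
        (intervalIntegrable_const (c := g0 b)) (hint a b ha' hb')
        (fun t ht => hg0 (le_trans ha' ht.1) hb' ht.2)
      simpa [smul_eq_mul] using this
    have hub : (∫ t in b..c, g0 t) ≤ (c - b) * g0 b := by
      have := intervalIntegral.integral_mono_on (le_of_lt hbc)
        (hint b c hb' hc') (intervalIntegrable_const (c := g0 b))
        (fun t ht => hg0 hb' (le_trans hb' ht.1) ht.1)
      simpa [smul_eq_mul] using this
    rw [h1, h2]
    have hba : (0:ℝ) < b - a := sub_pos.mpr hab
    have hcb : (0:ℝ) < c - b := sub_pos.mpr hbc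
    have hL : g0 b ≤ (∫ t in a..b, g0 t) / (b - a) :=
      (le_div_iff₀ hba).mpr (by linarith [hlb])
    have hR : (∫ t in b..c, g0 t) / (c - b) ≤ g0 b :=
      (div_le_iff₀ hcb).mpr (by linarith [hub])
    linarith
  -- G0 + C is concave on [0,∞)
  have hGC : ConcaveOn ℝ (Ici (0:ℝ)) (fun y => G0 y + C) := by
    constructor
    · exact convex_Ici 0
    · intro p hp q hq s t hs ht hst
      have hmem : s • p + t • q ∈ Ici (0:ℝ) := (convex_Ici 0) hp hq hs ht hst
      have e1 := hG0 p hp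
      have e2 := hG0 q hq
      have e3 := hG0 _ hmem
      have := hGconc.2 hp hq hs ht hst
      simp only [smul_eq_mul] at this e3 ⊢
      rw [e1, e2, e3]
      have hCsum : s*C + t*C = C := by rw [← add_mul, hst, one_mul]
      linarith
  -- G0 + C majorizes F0
  have hmaj' : ∀ y ≥ (0:ℝ), F0 y ≤ G0 y + C := by
    intro y hy
    have := abs_le.mp (hC y hy)
    linarith [this.2]
  have hupper := hleast _ hGC hmaj' x hx
  have hlower : G0 x - C ≤ Fhat x := by
    have := abs_le.mp (hC x hx)
    linarith [hmaj x hx, this.1]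
  rw [abs_le]
  constructor <;> linarith
end

section
/- Let $\mathbb{F}_n$ be the empirical CDF of $n$ points in $[0,\infty)$ and let $\widehat F_n$ be its least concave majorant, with left derivative $\hat f_n$ (the Grenander estimator). Then for any function $\varphi : \mathbb{R} \to \mathbb{R}$, $\int_0^\infty \varphi(\hat f_n(x))\, d(\widehat F_n - \mathbb{F}_n)(x) = 0$. -/
open Set MeasureTheory

/-- `∫ φ(f̂ₙ) d(F̂ₙ - 𝔽ₙ) = 0` for the Grenander estimator, stated as
equality of the two Stieltjes integrals. -/
theorem grenander_touchpoint_integral_identity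
    (n m : ℕ) (hn : 0 < n) (hm : 0 < m)
    (X : Fin n → ℝ) (hXnn : ∀ i, 0 ≤ X i) (hXmono : Monotone X)
    (Fn Fhat : StieltjesFunction ℝ) (fn : ℝ → ℝ) (φ : ℝ → ℝ)
    -- `Fn` is the empirical CDF of the points `X i`
    (hFn : ∀ x : ℝ, Fn x = (n : ℝ)⁻¹ * ∑ i, if X i ≤ x then (1:ℝ) else 0)
    -- touch points of the least concave majorant
    (τ : Fin (m + 1) → ℝ) (hτmono : StrictMono τ)
    (hτ0 : τ 0 = 0) (hτlast : ∀ i, X i ≤ τ (Fin.last m))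
    -- `Fhat` is the least concave majorant of `Fn` on `[τ 0, τ m]`
    (hconc : ConcaveOn ℝ (Icc (τ 0) (τ (Fin.last m))) (fun x => Fhat x))
    (hmaj : ∀ x ∈ Icc (τ 0) (τ (Fin.last m)), Fn x ≤ Fhat x)
    (hleast : ∀ G : ℝ → ℝ, ConcaveOn ℝ (Icc (τ 0) (τ (Fin.last m))) G →
      (∀ x ∈ Icc (τ 0) (τ (Fin.last m)), Fn x ≤ G x) →
      ∀ x ∈ Icc (τ 0) (τ (Fin.last m)), Fhat x ≤ G x)
    -- `Fhat` touches `Fn` exactly at the points `τ i`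
    (htouch : ∀ x ∈ Icc (τ 0) (τ (Fin.last m)), (Fhat x = Fn x ↔ ∃ i, x = τ i))
    -- `fn` is the left derivative of `Fhat`, constant between touch points
    (hfn : ∀ x : ℝ, fn x = derivWithin (fun y => Fhat y) (Iio x) x)
    (hconst : ∀ i : Fin m, ∀ x ∈ Ioc (τ i.castSucc) (τ i.succ), fn x = fn (τ i.succ))
    -- integrability so that both integrals exist
    (hint1 : Integrable (fun x => φ (fn x)) (Fhat.measure.restrict (Ioc (τ 0) (τ (Fin.last m)))))
    (hint2 : Integrable (fun x => φ (fn x)) (Fn.measure.restrict (Ioc (τ 0) (τ (Fin.last m))))) :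
    ∫ x in Ioc (τ 0) (τ (Fin.last m)), φ (fn x) ∂Fhat.measure =
      ∫ x in Ioc (τ 0) (τ (Fin.last m)), φ (fn x) ∂Fn.measure := by
  classical
  have hmem : ∀ j : Fin (m+1), τ j ∈ Icc (τ 0) (τ (Fin.last m)) :=
    fun j => ⟨hτmono.monotone (Fin.zero_le j), hτmono.monotone (Fin.le_last j)⟩
  have htc : ∀ j, Fhat (τ j) = Fn (τ j) := fun j => (htouch _ (hmem j)).2 ⟨j, rfl⟩
  set a : ℕ → ℝ := fun k => τ ⟨min k m, Nat.lt_succ_of_le (min_le_right _ _)⟩ with ha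
  have ha0 : a 0 = τ 0 := by
    simp only [ha]; congr 1
  have ham : a m = τ (Fin.last m) := by
    simp only [ha]; congr 1; exact Fin.ext (by simp [Fin.last])
  have haτ : ∀ k, ∃ j : Fin (m+1), a k = τ j := fun k => ⟨_, rfl⟩
  have hak : ∀ k (hk : k < m), a k = τ (Fin.castSucc ⟨k, hk⟩) := by
    intro k hk
    simp only [ha]; congr 1; exact Fin.ext (by simp [Fin.castSucc, min_eq_left hk.le])
  have hak1 : ∀ k (hk : k < m), a (k+1) = τ (Fin.succ ⟨k, hk⟩) := by
    intro k hk
    simp only [ha]; congr 1; exact Fin.ext (by simp [Fin.succ, min_eq_left (Nat.succ_le_of_lt hk)])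
  have hamono : Monotone a := by
    intro i j hij
    exact hτmono.monotone (by simp [Fin.le_def, min_le_min_right _ hij])
  have hsub : ∀ k, Ioc (a k) (a (k+1)) ⊆ Ioc (τ 0) (τ (Fin.last m)) := by
    intro k
    exact Ioc_subset_Ioc (hτmono.monotone (Fin.zero_le _)) (hτmono.monotone (Fin.le_last _))
  have key : ∀ (S : StieltjesFunction ℝ), (∀ j, S (τ j) = Fn (τ j)) →
      Integrable (fun x => φ (fn x)) (S.measure.restrict (Ioc (τ 0) (τ (Fin.last m)))) →
      ∫ x in Ioc (τ 0) (τ (Fin.last m)), φ (fn x) ∂S.measure =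
        ∑ k ∈ Finset.range m, (Fn (a (k+1)) - Fn (a k)) * φ (fn (a (k+1))) := by
    intro S hS hint
    have hII : ∀ k, k < m → IntervalIntegrable (fun x => φ (fn x)) S.measure (a k) (a (k+1)) := by
      intro k hk
      rw [intervalIntegrable_iff_integrableOn_Ioc_of_le (hamono (Nat.le_succ k))]
      exact MeasureTheory.IntegrableOn.mono_set hint (hsub k)
    have hsum := intervalIntegral.sum_integral_adjacent_intervals (μ := S.measure)
      (f := fun x => φ (fn x)) (a := a) (n := m) hII
    have h0m : ∫ x in Ioc (τ 0) (τ (Fin.last m)), φ (fn x) ∂S.measure =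
        ∫ x in (a 0)..(a m), φ (fn x) ∂S.measure := by
      have : a 0 ≤ a m := hamono (Nat.zero_le m)
      rw [ha0, ham] at this
      rw [ha0, ham, intervalIntegral.integral_of_le this]
    rw [h0m, ← hsum]
    apply Finset.sum_congr rfl
    intro k hk
    have hk' : k < m := Finset.mem_range.mp hk
    have hle : a k ≤ a (k+1) := hamono (Nat.le_succ k)
    rw [intervalIntegral.integral_of_le hle]
    have hcongr : ∀ x ∈ Ioc (a k) (a (k+1)), φ (fn x) = φ (fn (a (k+1))) := by
      intro x hx
      rw [hak1 k hk']
      congr 1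
      exact hconst ⟨k, hk'⟩ x (by rwa [hak k hk', hak1 k hk'] at hx)
    rw [setIntegral_congr_fun measurableSet_Ioc hcongr, setIntegral_const,
      measureReal_def, StieltjesFunction.measure_Ioc, ENNReal.toReal_ofReal (sub_nonneg.mpr (S.mono hle))]
    obtain ⟨j1, hj1⟩ := haτ k
    obtain ⟨j2, hj2⟩ := haτ (k+1)
    rw [hj1, hj2, hS j1, hS j2, ← hj1, ← hj2, smul_eq_mul]
  rw [key Fhat htc hint1, key Fn (fun _ => rfl) hint2]
end

section
/- Let $X_1,\ldots,X_n$ be i.i.d. with decreasing density $f_0$ on $[0,1]$ that is constant on $(a,b]$, and fix $x \in (a,b)$, $t_0 > 0$, $k_0 > 0$. Set $c_0 = t_0/(f_0(b) + t_0/k_0)$. Then for all $n \ge (k_0/3)^2$ and all $t \ge t_0$, $P\big(\hat f_n(x) > f_0(x) + n^{-1/2} t\big) \le \exp\big\{-c_0\frac{t(x-a)}{2}\big\}$. -/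
open Set MeasureTheory ProbabilityTheory

noncomputable def lcmOn (g : ℝ → ℝ) (s : Set ℝ) : ℝ → ℝ :=
  fun x => sInf {y | ∃ φ : ℝ → ℝ, ConcaveOn ℝ s φ ∧ (∀ z ∈ s, g z ≤ φ z) ∧ y = φ x}

noncomputable def grenEst (F : ℝ → ℝ) (x : ℝ) : ℝ :=
  derivWithin (lcmOn F (Ici 0)) (Iio x) x

noncomputable def empCDF (n : ℕ) (X : Fin n → ℝ) : ℝ → ℝ :=
  fun y => (n : ℝ)⁻¹ * ∑ i, if X i ≤ y then (1:ℝ) else 0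

lemma grenPartI (F : ℝ → ℝ) (C : Finset ℝ)
    (hC0 : (0:ℝ) ∈ C) (hCnn : ∀ c ∈ C, 0 ≤ c)
    (hcand : ∀ y : ℝ, 0 ≤ y → ∃ c ∈ C, c ≤ y ∧ F y = F c)
    (a x β : ℝ) (ha : 0 ≤ a) (hax : a < x) (hβ : 0 < β)
    (hD : β < grenEst F x) :
    ∃ s, x ≤ s ∧ β * (s - a) ≤ F s - F a := by
  classical
  obtain ⟨u, huC, humax⟩ := Finset.exists_max_image C (fun c => F c - β * c) ⟨0, hC0⟩

  have hu0 : 0 ≤ u := hCnn u huC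
  have hx0 : (0:ℝ) ≤ x := le_trans ha hax.le
  by_cases hux : x ≤ u
  · refine ⟨u, hux, ?_⟩
    obtain ⟨c, hcC, hca, hFa⟩ := hcand a ha
    have h1 : F c - β * c ≤ F u - β * u := humax c hcC
    have h2 : β * c ≤ β * a := mul_le_mul_of_nonneg_left hca hβ.le
    rw [hFa]; nlinarith
  · push_neg at hux
    exfalso
    set M := lcmOn F (Ici 0) with hMdef
    set ℓ : ℝ → ℝ := fun y => (F u - β * u) + β * y with hℓdef
    have hℓconc : ConcaveOn ℝ (Ici 0) ℓ := by
      refine ⟨convex_Ici 0, ?_⟩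
      intro p _ q _ α γ hα hγ hαγ
      simp only [hℓdef, smul_eq_mul]
      apply le_of_eq
      linear_combination (F u - β * u) * hαγ
    have hℓmaj : ∀ z ∈ Ici (0:ℝ), F z ≤ ℓ z := by
      intro z hz
      obtain ⟨c, hcC, hcz, hFz⟩ := hcand z hz
      have h1 := humax c hcC
      have h2 : β * c ≤ β * z := mul_le_mul_of_nonneg_left hcz hβ.le
      simp only [hℓdef]; linarith [hFz.le]
    have hmemℓ : ∀ z : ℝ, ℓ z ∈ {y | ∃ φ : ℝ → ℝ, ConcaveOn ℝ (Ici 0) φ ∧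
        (∀ w ∈ Ici 0, F w ≤ φ w) ∧ y = φ z} := fun z => ⟨ℓ, hℓconc, hℓmaj, rfl⟩
    have hbddz : ∀ z ∈ Ici (0:ℝ), BddBelow {y | ∃ φ : ℝ → ℝ, ConcaveOn ℝ (Ici 0) φ ∧
        (∀ w ∈ Ici 0, F w ≤ φ w) ∧ y = φ z} := by
      intro z hz
      refine ⟨F z, ?_⟩
      rintro y ⟨φ, hφc, hφm, rfl⟩
      exact hφm z hz
    have hMle : ∀ z ∈ Ici (0:ℝ), M z ≤ ℓ z := fun z hz => csInf_le (hbddz z hz) (hmemℓ z)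
    have hMge : ∀ z ∈ Ici (0:ℝ), F z ≤ M z := by
      intro z hz
      refine le_csInf ⟨ℓ z, hmemℓ z⟩ ?_
      rintro y ⟨φ, hφc, hφm, rfl⟩
      exact hφm z hz
    have hMφ : ∀ z ∈ Ici (0:ℝ), ∀ φ : ℝ → ℝ, ConcaveOn ℝ (Ici 0) φ →
        (∀ w ∈ Ici 0, F w ≤ φ w) → M z ≤ φ z := by
      intro z hz φ hφc hφm
      exact csInf_le (hbddz z hz) ⟨φ, hφc, hφm, rfl⟩
    -- slope bound for u < y < x
    have hslope : ∀ y, u < y → y < x → slope M x y ≤ β := by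
      intro y hy1 hy2
      have hy0 : (0:ℝ) ≤ y := le_trans hu0 hy1.le
      have hxu : 0 < x - u := by linarith
      set α := (x - y)/(x - u) with hαdef
      set γ := (y - u)/(x - u) with hγdef
      have hα : 0 ≤ α := div_nonneg (by linarith) hxu.le
      have hγ : 0 ≤ γ := div_nonneg (by linarith) hxu.le
      have hαγ : α + γ = 1 := by rw [hαdef, hγdef]; field_simp; ring
      have hcombo : α * u + γ * x = y := by rw [hαdef, hγdef]; field_simp; ring
      have hMy : α * M u + γ * M x ≤ M y := by
        refine le_csInf ⟨ℓ y, hmemℓ y⟩ ?_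
        rintro _ ⟨φ, hφc, hφm, rfl⟩
        have h1 := hφc.2 (mem_Ici.2 hu0) (mem_Ici.2 hx0) hα hγ hαγ
        simp only [smul_eq_mul, hcombo] at h1
        have h2 : M u ≤ φ u := hMφ u (mem_Ici.2 hu0) φ hφc hφm
        have h3 : M x ≤ φ x := hMφ x (mem_Ici.2 hx0) φ hφc hφm
        nlinarith
      have hMxℓ : M x ≤ ℓ x := hMle x (mem_Ici.2 hx0)
      have hMuF : F u ≤ M u := hMge u (mem_Ici.2 hu0)
      have hℓx : ℓ x = F u - β * u + β * x := rfl
      have hℓu : ℓ u = F u := by show F u - β * u + β * u = F u; ring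
      have hαxu : α * (x - u) = x - y := by rw [hαdef]; field_simp
      have hγα : γ = 1 - α := by linarith
      rw [hγα] at hMy
      have hMxMu : M x - M u ≤ β * (x - u) := by
        rw [hℓx] at hMxℓ; linarith
      have h5 : M x - M y ≤ α * (M x - M u) := by nlinarith [hMy]
      have h6 : α * (M x - M u) ≤ α * (β * (x - u)) :=
        mul_le_mul_of_nonneg_left hMxMu hα
      have h7 : α * (β * (x - u)) = β * (x - y) := by
        rw [← hαxu]; ring
      have hkey : M x - M y ≤ β * (x - y) := by
        rw [← h7]; linarith
      rw [slope_def_field]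
      rw [div_le_iff_of_neg (by linarith : y - x < 0)]
      nlinarith
    -- derivative facts
    have hdiff : DifferentiableWithinAt ℝ M (Iio x) x := by
      by_contra hc
      have : grenEst F x = 0 := derivWithin_zero_of_not_differentiableWithinAt hc
      rw [this] at hD; linarith
    have hHD := hdiff.hasDerivWithinAt
    rw [hasDerivWithinAt_iff_tendsto_slope] at hHD
    have hxx : x ∉ Iio x := by simp
    rw [diff_singleton_eq_self hxx] at hHD
    have hev : ∀ᶠ y in nhdsWithin x (Iio x), slope M x y ≤ β := by
      have h1 : Ioi u ∈ nhds x := Ioi_mem_nhds hux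
      have h2 : Ioi u ∈ nhdsWithin x (Iio x) := mem_nhdsWithin_of_mem_nhds h1
      filter_upwards [h2, self_mem_nhdsWithin] with y hy1 hy2
      exact hslope y hy1 hy2
    have hfin : derivWithin M (Iio x) x ≤ β := le_of_tendsto hHD hev
    have : grenEst F x = derivWithin M (Iio x) x := rfl
    rw [this] at hD
    linarith

lemma aux_prod_integral {Ω : Type*} [MeasurableSpace Ω] (P : Measure Ω) [IsProbabilityMeasure P]
    (n : ℕ) (X : Fin n → Ω → ℝ) (hmeas : ∀ i, Measurable (X i))
    (hiid : iIndepFun X P)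
    {κ : Type} [Fintype κ] [DecidableEq κ] [MeasurableSpace κ] [MeasurableSingletonClass κ]
    (cell : ℝ → κ) (hcell : ∀ c : κ, MeasurableSet (cell ⁻¹' {c}))
    (w : κ → ℝ) (H : (Fin n → κ) → ℝ) :
    ∫ ω, (∏ i, w (cell (X i ω))) * H (fun i => cell (X i ω)) ∂P
      = ∑ v : Fin n → κ, H v * ((∏ i, w (v i)) * ∏ i, (P (X i ⁻¹' (cell ⁻¹' {v i}))).toReal) := by
  classical
  have hSeq : ∀ v : Fin n → κ, {ω | ∀ i, cell (X i ω) = v i}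
      = ⋂ i, (X i) ⁻¹' (cell ⁻¹' {v i}) := by
    intro v; ext ω; simp [Set.mem_iInter]
  have hSmeas : ∀ v : Fin n → κ, MeasurableSet {ω | ∀ i, cell (X i ω) = v i} := by
    intro v; rw [hSeq]
    exact MeasurableSet.iInter fun i => (hmeas i) (hcell (v i))
  have hptwise : ∀ ω, (∏ i, w (cell (X i ω))) * H (fun i => cell (X i ω))
      = ∑ v : Fin n → κ, Set.indicator {ω' | ∀ i, cell (X i ω') = v i}
          (fun _ => H v * ∏ i, w (v i)) ω := by
    intro ω
    have h1 : ∀ v : Fin n → κ, Set.indicator {ω' | ∀ i, cell (X i ω') = v i}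
        (fun _ => H v * ∏ i, w (v i)) ω
        = if v = (fun i => cell (X i ω)) then H v * ∏ i, w (v i) else 0 := by
      intro v
      rw [Set.indicator_apply]
      refine if_congr ?_ rfl rfl
      constructor
      · intro h; exact (funext h).symm
      · intro h i; exact (congrFun h i).symm
    rw [Finset.sum_congr rfl (fun v _ => h1 v), Finset.sum_ite_eq' Finset.univ]
    simp [mul_comm]
  have hint : ∀ v : Fin n → κ, Integrable (Set.indicator {ω' | ∀ i, cell (X i ω') = v i}
      (fun _ => H v * ∏ i, w (v i)) : Ω → ℝ) P :=
    fun v => (integrable_const _).indicator (hSmeas v)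
  calc ∫ ω, (∏ i, w (cell (X i ω))) * H (fun i => cell (X i ω)) ∂P
      = ∫ ω, ∑ v : Fin n → κ, Set.indicator {ω' | ∀ i, cell (X i ω') = v i}
          (fun _ => H v * ∏ i, w (v i)) ω ∂P := by
        exact integral_congr_ae (Filter.Eventually.of_forall hptwise)
    _ = ∑ v : Fin n → κ, ∫ ω, Set.indicator {ω' | ∀ i, cell (X i ω') = v i}
          (fun _ => H v * ∏ i, w (v i)) ω ∂P := by
        exact integral_finset_sum Finset.univ (fun v _ => hint v)
    _ = ∑ v : Fin n → κ, (P {ω' | ∀ i, cell (X i ω') = v i}).toReal • (H v * ∏ i, w (v i)) := by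
        refine Finset.sum_congr rfl (fun v _ => ?_)
        exact integral_indicator_const _ (hSmeas v)
    _ = ∑ v : Fin n → κ, H v * ((∏ i, w (v i)) * ∏ i, (P (X i ⁻¹' (cell ⁻¹' {v i}))).toReal) := by
        refine Finset.sum_congr rfl (fun v _ => ?_)
        have h2 : P {ω' | ∀ i, cell (X i ω') = v i} = ∏ i, P (X i ⁻¹' (cell ⁻¹' {v i})) := by
          have h3 := (iIndepFun_iff_measure_inter_preimage_eq_mul.mp hiid) Finset.univ
            (sets := fun i => cell ⁻¹' {v i}) (fun i _ => hcell (v i))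
          rw [hSeq]
          rw [← h3]
          congr 1
          ext ω; simp
        rw [h2, ENNReal.toReal_prod, smul_eq_mul]
        ring

lemma aux_regroup {n : ℕ} {κ κ' : Type} [Fintype κ] [DecidableEq κ] [Fintype κ'] [DecidableEq κ']
    (q : κ → κ') (A : Fin n → κ → ℝ) (H : (Fin n → κ') → ℝ) :
    ∑ v : Fin n → κ, H (fun i => q (v i)) * ∏ i, A i (v i)
      = ∑ v' : Fin n → κ', H v' * ∏ i, (∑ c ∈ Finset.univ.filter (fun c => q c = v' i), A i c) := by
  classical
  have h1 : ∀ v' : Fin n → κ', H v' * ∏ i, (∑ c ∈ Finset.univ.filter (fun c => q c = v' i), A i c)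
      = ∑ u : Fin n → κ, if (fun i => q (u i)) = v' then H v' * ∏ i, A i (u i) else 0 := by
    intro v'
    rw [Finset.prod_univ_sum, Finset.mul_sum]
    have h2 : Fintype.piFinset (fun i => Finset.univ.filter (fun c => q c = v' i))
        = Finset.univ.filter (fun u : Fin n → κ => (fun i => q (u i)) = v') := by
      ext u
      simp [Fintype.mem_piFinset, funext_iff]
    rw [h2, Finset.sum_filter]
  rw [Finset.sum_congr rfl (fun v' _ => h1 v'), Finset.sum_comm]
  refine Finset.sum_congr rfl (fun u _ => ?_)
  rw [Finset.sum_ite_eq Finset.univ (fun i => q (u i))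
    (fun v' => H v' * ∏ i, A i (u i))]
  simp

lemma log_ge_aux (z : ℝ) (hz : 0 ≤ z) : z / (1 + z) ≤ Real.log (1 + z) := by
  have h1z : (0:ℝ) < 1 + z := by linarith
  have h := Real.log_le_sub_one_of_pos (inv_pos.2 h1z)
  rw [Real.log_inv] at h
  have h2 : (1 + z)⁻¹ - 1 = -(z / (1 + z)) := by field_simp; ring
  linarith

lemma hasDerivAt_log1p (z : ℝ) (hz : 0 ≤ z) :
    HasDerivAt (fun y : ℝ => Real.log (1 + y)) (1 / (1 + z)) z := by
  have h1z : (1:ℝ) + z ≠ 0 := by positivity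
  have h1 : HasDerivAt (fun y : ℝ => 1 + y) 1 z := by
    simpa using (hasDerivAt_id z).const_add 1
  rw [one_div]; exact ((Real.hasDerivAt_log h1z).comp z h1).congr_deriv (mul_one _)

lemma B_nonneg (z : ℝ) (hz : 0 ≤ z) :
    0 ≤ (8/3 + 4*z/3) * Real.log (1 + z) - 8*z/3 := by
  set B : ℝ → ℝ := fun y => (8/3 + 4*y/3) * Real.log (1 + y) - 8*y/3 with hB
  have hder : ∀ y : ℝ, 0 ≤ y → HasDerivAt B
      (4/3 * Real.log (1 + y) + (8/3 + 4*y/3) * (1/(1+y)) - 8/3) y := by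
    intro y hy
    have h1 : HasDerivAt (fun w : ℝ => (8/3 + 4*w/3)) (4/3) y := by
      have := ((hasDerivAt_id y).const_mul (4/3 : ℝ)).const_add (8/3 : ℝ)
      simpa [mul_comm, mul_div_assoc] using this
    have h2 := hasDerivAt_log1p y hy
    have h3 := h1.mul h2
    have h4 : HasDerivAt (fun w : ℝ => 8*w/3) (8/3) y := by
      have := (hasDerivAt_id y).const_mul (8/3 : ℝ)
      simpa [mul_comm, mul_div_assoc] using this
    have h5 := h3.sub h4
    exact h5
  have hmono : MonotoneOn B (Ici 0) := by
    apply monotoneOn_of_deriv_nonneg (convex_Ici 0)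
    · intro y hy
      exact (hder y hy).continuousAt.continuousWithinAt
    · intro y hy
      rw [interior_Ici] at hy
      have hy' : 0 < y := hy
      exact (hder y hy'.le).differentiableAt.differentiableWithinAt
    · intro y hy
      rw [interior_Ici] at hy
      have hy' : 0 < y := hy
      rw [(hder y hy'.le).deriv]
      have hy1 : (0:ℝ) < 1 + y := by linarith
      have hlog := log_ge_aux y hy'.le
      have hid : (8/3 + 4*y/3) * (1/(1+y)) = 8/3 - (4/3) * (y/(1+y)) := by
        field_simp; ring
      linarith [hlog, hid]
  have h0 : B 0 = 0 := by simp [hB]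
  have := hmono (self_mem_Ici) (mem_Ici.2 hz) hz
  rw [h0] at this
  exact this

lemma A_nonneg (l : ℝ) (hl : 0 ≤ l) :
    l^2 ≤ (2 + 2*l/3) * ((1+l) * Real.log (1+l) - l) := by
  set A : ℝ → ℝ := fun y => (2 + 2*y/3) * ((1+y) * Real.log (1+y) - y) - y^2 with hA
  have hder : ∀ y : ℝ, 0 ≤ y → HasDerivAt A
      ((8/3 + 4*y/3) * Real.log (1 + y) - 8*y/3) y := by
    intro y hy
    have h1y : (1:ℝ) + y ≠ 0 := by positivity
    have h1 : HasDerivAt (fun w : ℝ => 2 + 2*w/3) (2/3) y := by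
      have := ((hasDerivAt_id y).const_mul (2/3 : ℝ)).const_add (2:ℝ)
      simpa [mul_comm, mul_div_assoc] using this
    have h2 : HasDerivAt (fun w : ℝ => (1+w) * Real.log (1+w))
        (Real.log (1+y) + 1) y := by
      have ha : HasDerivAt (fun w : ℝ => 1 + w) 1 y := by
        simpa using (hasDerivAt_id y).const_add 1
      have hb := hasDerivAt_log1p y hy
      have hc := ha.mul hb
      refine hc.congr_deriv ?_
      field_simp
    have h3 : HasDerivAt (fun w : ℝ => (1+w) * Real.log (1+w) - w)
        (Real.log (1+y)) y := by
      have := h2.sub (hasDerivAt_id y)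
      refine this.congr_deriv ?_
      simp
    have h4 := h1.mul h3
    have h5 : HasDerivAt (fun w : ℝ => w^2) (2*y) y := by
      simpa [mul_comm] using hasDerivAt_pow 2 y
    have h6 := h4.sub h5
    refine h6.congr_deriv ?_
    ring
  have hmono : MonotoneOn A (Ici 0) := by
    apply monotoneOn_of_deriv_nonneg (convex_Ici 0)
    · intro y hy
      exact (hder y hy).continuousAt.continuousWithinAt
    · intro y hy
      rw [interior_Ici] at hy
      have hy' : 0 < y := hy
      exact (hder y hy'.le).differentiableAt.differentiableWithinAt
    · intro y hy
      rw [interior_Ici] at hy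
      have hy' : 0 < y := hy
      rw [(hder y hy'.le).deriv]
      exact B_nonneg y hy'.le
  have h0 : A 0 = 0 := by simp [hA]
  have := hmono (self_mem_Ici) (mem_Ici.2 hl) hl
  rw [h0] at this
  simp only [hA] at this
  linarith

lemma chernoff_pointwise (n k : ℕ) (hkn : k ≤ n) (hn : 0 < n) (θ u : ℝ) (hθ : 1 < θ)
    (hu0 : 0 ≤ u) (hu : u ≤ (k:ℝ) / ((n:ℝ) * θ)) :
    Real.exp ((k:ℝ) * (Real.log θ - 1 + 1/θ)) ≤ θ^k * ((1 - θ*u)/(1 - u))^(n-k) := by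
  have hθ0 : (0:ℝ) < θ := by linarith
  have hn0 : (0:ℝ) < (n:ℝ) := by exact_mod_cast hn
  have hkn' : (k:ℝ) ≤ (n:ℝ) := by exact_mod_cast hkn
  have hnθ : (0:ℝ) < (n:ℝ)*θ := by positivity
  have hc1θ : (k:ℝ)/((n:ℝ)*θ) ≤ 1/θ := by
    rw [div_le_div_iff₀ hnθ hθ0]
    nlinarith
  have huθ : θ * u ≤ 1 := by
    have := hu.trans hc1θ
    rw [le_div_iff₀ hθ0] at this
    linarith [this]
  have hu1 : u < 1 := by
    have h2 : (1:ℝ)/θ < 1 := by rw [div_lt_one hθ0]; linarith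
    linarith [hu.trans hc1θ]
  rcases eq_or_lt_of_le hkn with heq | hlt
  · -- k = n
    subst heq
    simp only [Nat.sub_self, pow_zero, mul_one]
    rw [show θ^k = Real.exp ((k:ℝ) * Real.log θ) by
      rw [Real.exp_nat_mul, Real.exp_log hθ0]]
    apply Real.exp_le_exp.mpr
    have h1θ : 1/θ ≤ 1 := by rw [div_le_one hθ0]; linarith
    have : Real.log θ - 1 + 1/θ ≤ Real.log θ := by linarith
    nlinarith [Nat.cast_nonneg (α := ℝ) k]
  · -- k < n
    have hkn2 : (k:ℝ) < (n:ℝ) := by exact_mod_cast hlt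
    have hnk0 : (0:ℝ) < (n:ℝ) - k := by linarith
    set c : ℝ := (k:ℝ)/((n:ℝ)*θ) with hc
    have hc0 : 0 ≤ c := by positivity
    have hc1 : c < 1 := lt_of_le_of_lt hc1θ (by rw [div_lt_one hθ0]; linarith)
    set wmin : ℝ := ((n:ℝ) - k)*θ/((n:ℝ)*θ - k) with hwmin
    have hden : (0:ℝ) < (n:ℝ)*θ - k := by nlinarith
    have hwmin0 : 0 < wmin := by
      apply div_pos; nlinarith; exact hden
    -- (1-θu)/(1-u) ≥ wmin
    have hwminle : wmin ≤ (1 - θ*u)/(1 - u) := by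
      have heq2 : wmin = (1 - θ*c)/(1 - c) := by
        rw [hwmin, hc]
        have h1c : ((n:ℝ)*θ - k) ≠ 0 := hden.ne'
        have h2c : (1:ℝ) - (k:ℝ)/((n:ℝ)*θ) ≠ 0 := by
          have : (0:ℝ) < 1 - (k:ℝ)/((n:ℝ)*θ) := by
            rw [sub_pos, div_lt_one hnθ]; nlinarith
          exact this.ne'
        field_simp
      rw [heq2, div_le_div_iff₀ (by linarith) (by linarith)]
      nlinarith [hu, hu0, hθ0, hu1]
    have hpow : wmin^(n-k) ≤ ((1 - θ*u)/(1 - u))^(n-k) :=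
      pow_le_pow_left₀ hwmin0.le hwminle _
    have hmain : Real.exp ((k:ℝ) * (Real.log θ - 1 + 1/θ)) ≤ θ^k * wmin^(n-k) := by
      rw [show θ^k * wmin^(n-k) = Real.exp ((k:ℝ) * Real.log θ + ((n:ℝ)-k) * Real.log wmin) by
        rw [Real.exp_add, Real.exp_nat_mul, Real.exp_log hθ0,
          show ((n:ℝ)-(k:ℝ)) = ((n-k : ℕ):ℝ) by rw [Nat.cast_sub hkn],
          Real.exp_nat_mul, Real.exp_log hwmin0]]
      apply Real.exp_le_exp.mpr
      -- need k*(-1+1/θ) ≤ (n-k) * log wmin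
      have hlogwmin : -(((k:ℝ)*(θ-1))/(((n:ℝ)-k)*θ)) ≤ Real.log wmin := by
        have hR : Real.log (wmin⁻¹) ≤ wmin⁻¹ - 1 :=
          Real.log_le_sub_one_of_pos (by positivity)
        rw [Real.log_inv] at hR
        have hRval : wmin⁻¹ - 1 = ((k:ℝ)*(θ-1))/(((n:ℝ)-k)*θ) := by
          rw [hwmin]
          rw [inv_div]
          rw [div_sub_one (by positivity)]
          rw [div_eq_div_iff (by positivity) (by positivity)]
          ring
        rw [hRval] at hR
        linarith
      have h7 : ((n:ℝ)-k) * (-(((k:ℝ)*(θ-1))/(((n:ℝ)-k)*θ))) ≤ ((n:ℝ)-k) * Real.log wmin :=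
        mul_le_mul_of_nonneg_left hlogwmin hnk0.le
      have h8 : ((n:ℝ)-k) * (-(((k:ℝ)*(θ-1))/(((n:ℝ)-k)*θ))) = -((k:ℝ)*(θ-1)/θ) := by
        field_simp
      have h9 : (k:ℝ) * (Real.log θ - 1 + 1/θ) = (k:ℝ)*Real.log θ + (-((k:ℝ)*(θ-1)/θ)) := by
        field_simp
        ring
      rw [h9]
      have := h8 ▸ h7
      linarith
    calc Real.exp ((k:ℝ) * (Real.log θ - 1 + 1/θ)) ≤ θ^k * wmin^(n-k) := hmain
      _ ≤ θ^k * ((1 - θ*u)/(1 - u))^(n-k) := by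
          apply mul_le_mul_of_nonneg_left hpow (by positivity)

set_option maxHeartbeats 2000000 in
lemma mainBound {Ω : Type*} [MeasurableSpace Ω] (P : Measure Ω) [IsProbabilityMeasure P]
    (n : ℕ) (hn : 0 < n) (X : Fin n → Ω → ℝ) (hmeas : ∀ i, Measurable (X i))
    (hiid : iIndepFun X P)
    (ν : Measure ℝ) [IsProbabilityMeasure ν] (hlaw : ∀ i, Measure.map (X i) P = ν)
    (a β θ : ℝ) (hθ1 : 1 < θ) (hβ : 0 < β)
    (hub : ∀ j : ℕ, j ≤ n → ν (Ioc a (a + (j:ℝ)/((n:ℝ)*β))) ≤ ENNReal.ofReal ((j:ℝ)/((n:ℝ)*θ)))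
    (m : ℝ) (hm : 0 ≤ m) :
    P (⋃ k ∈ (Finset.Icc 1 n).filter (fun k : ℕ => m ≤ (k:ℝ)),
        {ω | k ≤ (Finset.univ.filter
          (fun i => a < X i ω ∧ X i ω ≤ a + (k:ℝ)/((n:ℝ)*β))).card}) ≤
      ENNReal.ofReal (Real.exp (-(m * (Real.log θ - 1 + 1/θ)))) := by
  classical
  have hn0 : (0:ℝ) < n := Nat.cast_pos.2 hn
  have hθ0 : (0:ℝ) < θ := by linarith
  have hnβ : (0:ℝ) < (n:ℝ)*β := by positivity
  have hnθ : (0:ℝ) < (n:ℝ)*θ := by positivity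
  set gθ : ℝ := Real.log θ - 1 + 1/θ with hgθdef
  have hgθ0 : 0 ≤ gθ := by
    have h1 := log_ge_aux (θ - 1) (by linarith)
    have h2 : 1 + (θ - 1) = θ := by ring
    rw [h2] at h1
    have h3 : (θ-1)/θ = 1 - 1/θ := by field_simp
    rw [h3] at h1
    rw [hgθdef]; linarith
  set s : ℕ → ℝ := fun j => a + (j:ℝ)/((n:ℝ)*β) with hsdef
  have hs_mono : ∀ j j' : ℕ, j ≤ j' → s j ≤ s j' := by
    intro j j' h
    have h2 : (j:ℝ) ≤ (j':ℝ) := Nat.cast_le.2 h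
    simp only [hsdef]
    gcongr
  have hs0 : s 0 = a := by simp [hsdef]
  have hsa : ∀ j : ℕ, a ≤ s j := by
    intro j; rw [← hs0]; exact hs_mono 0 j (Nat.zero_le j)
  have hyz : ∀ (y : ℝ) (j : ℕ), ((y - a)*((n:ℝ)*β) ≤ (j:ℝ)) ↔ y ≤ s j := by
    intro y j
    simp only [hsdef]
    rw [← sub_le_iff_le_add']
    rw [← le_div_iff₀ hnβ]
  have hyz2 : ∀ (y : ℝ) (j : ℕ), ((j:ℝ) < (y - a)*((n:ℝ)*β)) ↔ s j < y := by
    intro y j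
    rw [← not_iff_not, not_lt, not_lt]
    exact hyz y j
  -- the cell decomposition
  set cellN : ℝ → ℕ :=
    fun y => if a < y ∧ (y - a)*((n:ℝ)*β) ≤ (n:ℝ) then ⌈(y - a)*((n:ℝ)*β)⌉₊ else 0
    with hcellNdef
  have hcellN_le : ∀ y, cellN y ≤ n := by
    intro y
    simp only [hcellNdef]
    split_ifs with h
    · exact Nat.ceil_le.2 (by exact_mod_cast h.2)
    · exact Nat.zero_le n
  set cell : ℝ → Fin (n+1) := fun y => ⟨cellN y, Nat.lt_succ_of_le (hcellN_le y)⟩ with hcelldef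
  have hcell_val : ∀ y, ((cell y : Fin (n+1)) : ℕ) = cellN y := fun y => rfl
  -- range characterization
  have hcell_Ioc : ∀ (y : ℝ) (j : ℕ), 1 ≤ j → j ≤ n →
      ((1 ≤ cellN y ∧ cellN y ≤ j) ↔ (a < y ∧ y ≤ s j)) := by
    intro y j hj1 hjn
    simp only [hcellNdef]
    split_ifs with h
    · obtain ⟨hay, hyn⟩ := h
      have hz0 : 0 < (y - a)*((n:ℝ)*β) := by
        have : 0 < y - a := by linarith
        positivity
      constructor
      · rintro ⟨-, h2⟩
        refine ⟨hay, ?_⟩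
        rw [← hyz]
        exact le_trans (Nat.le_ceil _) (Nat.cast_le.2 h2)
      · rintro ⟨-, h2⟩
        refine ⟨Nat.one_le_iff_ne_zero.2 ((Nat.ceil_pos.2 hz0)).ne', ?_⟩
        exact Nat.ceil_le.2 ((hyz y j).2 h2)
    · constructor
      · rintro ⟨h1, -⟩; omega
      · rintro ⟨hay, hyj⟩
        exfalso
        push_neg at h
        have h2 := h hay
        have h3 : (y-a)*((n:ℝ)*β) ≤ (j:ℝ) := (hyz y j).2 hyj
        have h5 : (j:ℝ) ≤ (n:ℝ) := Nat.cast_le.2 hjn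
        linarith
  -- preimages of cells
  have hpre : ∀ c : ℕ, 1 ≤ c → c ≤ n → cellN ⁻¹' {c} = Ioc (s (c-1)) (s c) := by
    intro c hc1 hcn
    ext y
    simp only [Set.mem_preimage, Set.mem_singleton_iff, Set.mem_Ioc]
    simp only [hcellNdef]
    split_ifs with h
    · obtain ⟨hay, hyn⟩ := h
      rw [Nat.ceil_eq_iff (by omega)]
      rw [hyz y c, hyz2 y (c-1)]
    · push_neg at h
      constructor
      · intro h0; omega
      · rintro ⟨h1, h2⟩
        exfalso
        have hay : a < y := lt_of_le_of_lt (hsa (c-1)) h1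
        have h3 : (y-a)*((n:ℝ)*β) ≤ (c:ℝ) := (hyz y c).2 h2
        have h5 : (c:ℝ) ≤ (n:ℝ) := Nat.cast_le.2 hcn
        linarith [h hay]
  have hpre0 : cellN ⁻¹' {0} = (Ioc a (s n))ᶜ := by
    ext y
    simp only [Set.mem_preimage, Set.mem_singleton_iff, Set.mem_compl_iff, Set.mem_Ioc]
    constructor
    · intro h0 hmem
      have := (hcell_Ioc y n hn le_rfl).2 ⟨hmem.1, hmem.2⟩
      omega
    · intro hmem
      simp only [hcellNdef]
      split_ifs with h
      · exfalso
        exact hmem ⟨h.1, (hyz y n).1 (le_trans h.2 (by norm_num))⟩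
      · rfl
  have hcellmeas : ∀ c : Fin (n+1), MeasurableSet (cell ⁻¹' {c}) := by
    intro c
    have hceq : cell ⁻¹' {c} = cellN ⁻¹' {(c : ℕ)} := by
      ext y
      simp only [Set.mem_preimage, Set.mem_singleton_iff, hcelldef]
      constructor
      · intro h; rw [← h]
      · intro h; exact Fin.ext h
    rw [hceq]
    rcases Nat.eq_zero_or_pos (c : ℕ) with h0 | h1
    · rw [h0, hpre0]; exact measurableSet_Ioc.compl
    · rw [hpre (c:ℕ) h1 (Nat.lt_succ_iff.1 c.isLt)]
      exact measurableSet_Ioc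
  -- identification of Fin-preimages
  have hceq : ∀ c : Fin (n+1), cell ⁻¹' {c} = cellN ⁻¹' {(c : ℕ)} := by
    intro c
    ext y
    simp only [Set.mem_preimage, Set.mem_singleton_iff, hcelldef]
    constructor
    · intro h; rw [← h]
    · intro h; exact Fin.ext h
  -- masses
  set rc : Fin (n+1) → ℝ := fun c => (ν (cell ⁻¹' {c})).toReal with hrcdef
  have hrc_nonneg : ∀ c, 0 ≤ rc c := fun c => ENNReal.toReal_nonneg
  set u : ℕ → ℝ := fun j => (ν (Ioc a (s j))).toReal with hudef
  have hu_nonneg : ∀ j, 0 ≤ u j := fun j => ENNReal.toReal_nonneg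
  have hufin : ∀ A : Set ℝ, ν A ≠ ⊤ := fun A => (measure_lt_top ν A).ne
  have hub' : ∀ j : ℕ, j ≤ n → u j ≤ (j:ℝ)/((n:ℝ)*θ) := by
    intro j hj
    exact ENNReal.toReal_le_of_le_ofReal (by positivity) (hub j hj)
  have huinv : ∀ j : ℕ, j ≤ n → u j ≤ 1/θ := by
    intro j hj
    refine le_trans (hub' j hj) ?_
    rw [div_le_div_iff₀ hnθ hθ0]
    have : (j:ℝ) ≤ (n:ℝ) := Nat.cast_le.2 hj
    nlinarith
  have huθ : ∀ j : ℕ, j ≤ n → θ * u j ≤ 1 := by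
    intro j hj
    have h1 := huinv j hj
    rw [le_div_iff₀ hθ0] at h1
    linarith
  have hu1 : ∀ j : ℕ, j ≤ n → u j < 1 := by
    intro j hj
    have h2 : 1/θ < 1 := by rw [div_lt_one hθ0]; linarith
    linarith [huinv j hj]
  have hu_mono : ∀ j j' : ℕ, j ≤ j' → u j ≤ u j' :=
    fun j j' h => ENNReal.toReal_mono (hufin _)
      (measure_mono (Set.Ioc_subset_Ioc_right (hs_mono j j' h)))
  have hu0eq : u 0 = 0 := by
    simp only [hudef, hs0]
    simp
  -- value of rc on interior cells
  have hrc_val : ∀ (c : ℕ) (hc1 : 1 ≤ c) (hcn : c ≤ n),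
      rc ⟨c, Nat.lt_succ_of_le hcn⟩ = u c - u (c-1) := by
    intro c hc1 hcn
    have hsplit : ν (Ioc a (s c)) = ν (Ioc a (s (c-1))) + ν (Ioc (s (c-1)) (s c)) := by
      rw [← Set.Ioc_union_Ioc_eq_Ioc (hsa (c-1)) (hs_mono (c-1) c (by omega))]
      exact measure_union (Set.Ioc_disjoint_Ioc_of_le le_rfl) measurableSet_Ioc
    have h2 : rc ⟨c, Nat.lt_succ_of_le hcn⟩ = (ν (Ioc (s (c-1)) (s c))).toReal := by
      simp only [hrcdef]
      rw [hceq, hpre c hc1 hcn]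
    rw [h2]
    simp only [hudef]
    rw [hsplit, ENNReal.toReal_add (hufin _) (hufin _)]
    ring
  -- partial sums
  have husum : ∀ j : ℕ, j ≤ n →
      ∑ c ∈ Finset.univ.filter (fun c : Fin (n+1) => 1 ≤ (c:ℕ) ∧ (c:ℕ) ≤ j), rc c = u j := by
    intro j
    induction j with
    | zero =>
      intro _
      have hempty : Finset.univ.filter (fun c : Fin (n+1) => 1 ≤ (c:ℕ) ∧ (c:ℕ) ≤ 0) = ∅ := by
        ext c; simp only [Finset.mem_filter, Finset.mem_univ, true_and, Finset.notMem_empty, iff_false]; omega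
      rw [hempty, Finset.sum_empty, hu0eq]
    | succ j ih =>
      intro hj'
      have hj : j ≤ n := Nat.le_of_succ_le hj'
      have hins : Finset.univ.filter (fun c : Fin (n+1) => 1 ≤ (c:ℕ) ∧ (c:ℕ) ≤ j+1)
          = insert (⟨j+1, Nat.lt_succ_of_le hj'⟩ : Fin (n+1))
            (Finset.univ.filter (fun c : Fin (n+1) => 1 ≤ (c:ℕ) ∧ (c:ℕ) ≤ j)) := by
        ext c
        simp [Finset.mem_insert, Fin.ext_iff]
        omega
      rw [hins, Finset.sum_insert (by simp)]
      rw [ih hj]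
      have := hrc_val (j+1) (by omega) hj'
      simp only [Nat.add_sub_cancel] at this
      rw [this]
      ring
  have hrc0 : rc 0 = 1 - u n := by
    simp only [hrcdef, hudef]
    have h0 : ((0 : Fin (n+1)) : ℕ) = 0 := rfl
    rw [hceq, h0, hpre0]
    rw [measure_compl measurableSet_Ioc (hufin _)]
    rw [ENNReal.toReal_sub_of_le (measure_mono (Set.subset_univ _)) (hufin _)]
    simp
  -- weights
  set wv : ℕ → ℝ := fun j => (1 - θ * u j)/(1 - u j) with hwvdef
  have hwv_nonneg : ∀ j : ℕ, j ≤ n → 0 ≤ wv j := by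
    intro j hj
    exact div_nonneg (by linarith [huθ j hj]) (by linarith [hu1 j hj])
  have hwv_id : ∀ j : ℕ, j ≤ n → wv j * (1 - u j) = 1 - θ * u j := by
    intro j hj
    simp only [hwvdef]
    rw [div_mul_cancel₀]
    have := hu1 j hj
    intro hcontra
    rw [sub_eq_zero] at hcontra
    exact absurd hcontra.symm (ne_of_lt this)
  have hwv_anti : ∀ j j' : ℕ, j ≤ j' → j' ≤ n → wv j' ≤ wv j := by
    intro j j' hjj' hj'
    have hj : j ≤ n := le_trans hjj' hj'
    simp only [hwvdef]
    rw [div_le_div_iff₀ (by linarith [hu1 j' hj']) (by linarith [hu1 j hj])]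
    have := hu_mono j j' hjj'
    nlinarith [hu_nonneg j, hu_nonneg j']
  set fw : Fin (n+1) → ℝ := fun c => if 1 ≤ (c:ℕ) then θ else wv n with hfwdef
  set gw : ℕ → Fin (n+1) → ℝ := fun k c => if 1 ≤ (c:ℕ) ∧ (c:ℕ) ≤ k then θ else wv k with hgwdef
  have hfw_nonneg : ∀ c, 0 ≤ fw c := by
    intro c; simp only [hfwdef]; split_ifs
    · linarith
    · exact hwv_nonneg n le_rfl
  have hgw_nonneg : ∀ k : ℕ, k ≤ n → ∀ c, 0 ≤ gw k c := by
    intro k hk c; simp only [hgwdef]; split_ifs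
    · linarith
    · exact hwv_nonneg k hk
  set qk : ℕ → Fin (n+1) → Fin (n+1) := fun k c => if (c:ℕ) ≤ k then c else 0 with hqkdef
  -- splitting sums over cells
  have hsplitsum : ∀ (k : ℕ), k ≤ n → ∀ (F : Fin (n+1) → ℝ),
      ∑ c ∈ Finset.univ.filter (fun c : Fin (n+1) => 1 ≤ (c:ℕ) ∧ (c:ℕ) ≤ n), F c
        = ∑ c ∈ Finset.univ.filter (fun c : Fin (n+1) => 1 ≤ (c:ℕ) ∧ (c:ℕ) ≤ k), F c
          + ∑ c ∈ Finset.univ.filter (fun c : Fin (n+1) => k + 1 ≤ (c:ℕ)), F c := by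
    intro k hk F
    rw [← Finset.sum_union]
    · congr 1
      ext c
      have hc := c.isLt
      simp only [Finset.mem_union, Finset.mem_filter, Finset.mem_univ, true_and]
      omega
    · rw [Finset.disjoint_filter]
      intro c _ hc
      omega
  have hsum_tail : ∀ (k : ℕ), k ≤ n →
      ∑ c ∈ Finset.univ.filter (fun c : Fin (n+1) => k + 1 ≤ (c:ℕ)), rc c = u n - u k := by
    intro k hk
    have h1 := hsplitsum k hk rc
    rw [husum n le_rfl, husum k hk] at h1
    linarith
  -- the fiber identity
  have hfiber : ∀ (k : ℕ), k ∈ Finset.Icc 1 n → ∀ c' : Fin (n+1),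
      ∑ c ∈ Finset.univ.filter (fun c => qk k c = c'), fw c * rc c
        = ∑ c ∈ Finset.univ.filter (fun c => qk k c = c'), gw k c * rc c := by
    intro k hkmem c'
    rw [Finset.mem_Icc] at hkmem
    obtain ⟨hk1, hkn⟩ := hkmem
    by_cases hc'0 : (c' : ℕ) = 0
    · -- fiber of 0
      have hc'eq : c' = 0 := Fin.ext hc'0
      subst hc'eq
      have hfib : Finset.univ.filter (fun c : Fin (n+1) => qk k c = 0)
          = insert (0 : Fin (n+1)) (Finset.univ.filter (fun c : Fin (n+1) => k + 1 ≤ (c:ℕ))) := by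
        ext c
        simp only [Finset.mem_insert, Finset.mem_filter, Finset.mem_univ, true_and, hqkdef]
        constructor
        · intro h
          split_ifs at h with hck
          · left; exact h
          · right; omega
        · intro h
          rcases h with h | h
          · subst h; simp
          · rw [if_neg (by omega)]
        -- done
      have h0notin : (0 : Fin (n+1)) ∉ Finset.univ.filter (fun c : Fin (n+1) => k + 1 ≤ (c:ℕ)) := by
        simp
      rw [hfib, Finset.sum_insert h0notin, Finset.sum_insert h0notin]
      have hfw0 : fw 0 = wv n := by simp [hfwdef]
      have hgw0 : gw k 0 = wv k := by
        simp only [hgwdef]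
        rw [if_neg (by simp)]
      have hcongr1 : ∀ c ∈ Finset.univ.filter (fun c : Fin (n+1) => k + 1 ≤ (c:ℕ)),
          fw c * rc c = θ * rc c := by
        intro c hc
        simp only [Finset.mem_filter] at hc
        simp only [hfwdef]
        rw [if_pos (by omega)]
      have hcongr2 : ∀ c ∈ Finset.univ.filter (fun c : Fin (n+1) => k + 1 ≤ (c:ℕ)),
          gw k c * rc c = wv k * rc c := by
        intro c hc
        simp only [Finset.mem_filter] at hc
        simp only [hgwdef]
        rw [if_neg (by omega)]
      rw [Finset.sum_congr rfl hcongr1, Finset.sum_congr rfl hcongr2,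
        ← Finset.mul_sum, ← Finset.mul_sum, hsum_tail k hkn, hfw0, hgw0, hrc0]
      have e1 := hwv_id n le_rfl
      have e2 := hwv_id k hkn
      nlinarith [e1, e2]
    · by_cases hc'k : (c' : ℕ) ≤ k
      · -- singleton fiber
        have hfib : Finset.univ.filter (fun c : Fin (n+1) => qk k c = c') = {c'} := by
          ext c
          simp only [Finset.mem_filter, Finset.mem_univ, true_and, Finset.mem_singleton, hqkdef]
          constructor
          · intro h
            split_ifs at h with hck
            · exact h
            · exfalso; apply hc'0; rw [← h]; rfl
          · intro h; subst h; rw [if_pos hc'k]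
        rw [hfib, Finset.sum_singleton, Finset.sum_singleton]
        have : fw c' = gw k c' := by
          simp only [hfwdef, hgwdef]
          rw [if_pos (by omega), if_pos (by omega)]
        rw [this]
      · -- empty fiber
        have hfib : Finset.univ.filter (fun c : Fin (n+1) => qk k c = c') = ∅ := by
          refine Finset.eq_empty_iff_forall_notMem.2 ?_
          intro c hc
          simp only [Finset.mem_filter, Finset.mem_univ, true_and, hqkdef] at hc
          split_ifs at hc with hck
          · subst hc; exact hc'k hck
          · exact hc'0 (by rw [← hc]; rfl)
        rw [hfib, Finset.sum_empty, Finset.sum_empty]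
  -- total sum is 1
  have hptotal : ∑ c : Fin (n+1), fw c * rc c = 1 := by
    rw [← Finset.sum_filter_add_sum_filter_not Finset.univ (fun c : Fin (n+1) => 1 ≤ (c:ℕ))]
    have hc1 : ∀ c ∈ Finset.univ.filter (fun c : Fin (n+1) => 1 ≤ (c:ℕ)), fw c * rc c = θ * rc c := by
      intro c hc
      simp only [Finset.mem_filter] at hc
      simp only [hfwdef]
      rw [if_pos hc.2]
    have hfeq : Finset.univ.filter (fun c : Fin (n+1) => 1 ≤ (c:ℕ))
        = Finset.univ.filter (fun c : Fin (n+1) => 1 ≤ (c:ℕ) ∧ (c:ℕ) ≤ n) := by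
      ext c
      have := c.isLt
      simp only [Finset.mem_filter, Finset.mem_univ, true_and]
      omega
    have hfneg : Finset.univ.filter (fun c : Fin (n+1) => ¬ (1 ≤ (c:ℕ))) = {0} := by
      ext c
      simp only [Finset.mem_filter, Finset.mem_univ, true_and, Finset.mem_singleton]
      constructor
      · intro h
        have hc0 : (c:ℕ) = 0 := by omega
        exact Fin.ext (by rw [hc0]; rfl)
      · intro h; subst h; simp
    rw [Finset.sum_congr rfl hc1, hfeq, ← Finset.mul_sum, husum n le_rfl, hfneg,
      Finset.sum_singleton]
    have hfw0 : fw 0 = wv n := by simp [hfwdef]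
    rw [hfw0, hrc0]
    have e1 := hwv_id n le_rfl
    nlinarith [e1]
  -- crossing events
  set K : Finset ℕ := (Finset.Icc 1 n).filter (fun k : ℕ => m ≤ (k:ℝ)) with hKdef
  set cnt : ℕ → (Fin n → Fin (n+1)) → ℕ :=
    fun j v => (Finset.univ.filter (fun i => 1 ≤ (v i : ℕ) ∧ (v i : ℕ) ≤ j)).card with hcntdef
  set cond : ℕ → (Fin n → Fin (n+1)) → Prop :=
    fun k v => k ≤ cnt k v ∧ ∀ j ∈ K, j < k → cnt j v < j with hconddef
  set Hk : ℕ → (Fin n → Fin (n+1)) → ℝ := fun k v => if cond k v then 1 else 0 with hHkdef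
  have hHk01 : ∀ k v, Hk k v = 0 ∨ Hk k v = 1 := by
    intro k v; simp only [hHkdef]; split_ifs
    · right; rfl
    · left; rfl
  have hKfacts : ∀ k ∈ K, 1 ≤ k ∧ k ≤ n ∧ m ≤ (k:ℝ) := by
    intro k hk
    simp only [hKdef, Finset.mem_filter, Finset.mem_Icc] at hk
    exact ⟨hk.1.1, hk.1.2, hk.2⟩
  have hcnt_inv : ∀ (k j : ℕ), j ≤ k → ∀ v : Fin n → Fin (n+1),
      cnt j (fun i => qk k (v i)) = cnt j v := by
    intro k j hjk v
    simp only [hcntdef]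
    congr 1
    apply Finset.filter_congr
    intro i _
    simp only [hqkdef]
    split_ifs with h
    · exact Iff.rfl
    · simp only [Fin.val_zero]
      omega
  have hcond_inv : ∀ k ∈ K, ∀ v, cond k (fun i => qk k (v i)) ↔ cond k v := by
    intro k hk v
    simp only [hconddef]
    rw [hcnt_inv k k le_rfl v]
    constructor
    · rintro ⟨h1, h2⟩
      exact ⟨h1, fun j hj hjk => by rw [← hcnt_inv k j hjk.le v]; exact h2 j hj hjk⟩
    · rintro ⟨h1, h2⟩
      refine ⟨h1, fun j hj hjk => ?_⟩
      rw [hcnt_inv k j hjk.le v]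
      exact h2 j hj hjk
  have hHk_inv : ∀ k ∈ K, ∀ v, Hk k (fun i => qk k (v i)) = Hk k v := by
    intro k hk v
    simp only [hHkdef]
    rw [if_congr (hcond_inv k hk v) rfl rfl]
  have hcnt_le : ∀ (j : ℕ) (v : Fin n → Fin (n+1)), cnt j v ≤ n := by
    intro j v
    simp only [hcntdef]
    calc (Finset.filter _ Finset.univ).card ≤ (Finset.univ : Finset (Fin n)).card :=
          Finset.card_filter_le _ _
      _ = n := by simp
  -- pointwise lower bound on the product over the crossing event
  have hF3 : ∀ k ∈ K, ∀ v : Fin n → Fin (n+1), cond k v →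
      Real.exp (m * gθ) ≤ ∏ i, gw k (v i) := by
    intro k hk v hcond
    obtain ⟨hk1, hkn, hkm⟩ := hKfacts k hk
    have hSk : k ≤ cnt k v := hcond.1
    set S := cnt k v with hSdef
    have hSn : S ≤ n := hcnt_le k v
    have hS : S = (Finset.univ.filter (fun i => 1 ≤ (v i : ℕ) ∧ (v i : ℕ) ≤ k)).card := rfl
    have hprod : ∏ i, gw k (v i) = θ^S * (wv k)^(n - S) := by
      rw [← Finset.prod_filter_mul_prod_filter_not Finset.univ
        (fun i => 1 ≤ (v i : ℕ) ∧ (v i : ℕ) ≤ k)]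
      have h1 : ∀ i ∈ Finset.univ.filter (fun i => 1 ≤ (v i : ℕ) ∧ (v i : ℕ) ≤ k),
          gw k (v i) = θ := by
        intro i hi
        simp only [Finset.mem_filter] at hi
        simp only [hgwdef]
        rw [if_pos hi.2]
      have h2 : ∀ i ∈ Finset.univ.filter (fun i => ¬(1 ≤ (v i : ℕ) ∧ (v i : ℕ) ≤ k)),
          gw k (v i) = wv k := by
        intro i hi
        simp only [Finset.mem_filter] at hi
        simp only [hgwdef]
        rw [if_neg hi.2]
      rw [Finset.prod_congr rfl h1, Finset.prod_congr rfl h2,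
        Finset.prod_const, Finset.prod_const]
      have hcc := Finset.card_filter_add_card_filter_not (s := (Finset.univ : Finset (Fin n)))
        (p := fun i => 1 ≤ (v i : ℕ) ∧ (v i : ℕ) ≤ k)
      simp only [Finset.card_univ, Fintype.card_fin] at hcc
      have hc1 : (Finset.univ.filter (fun i => 1 ≤ (v i : ℕ) ∧ (v i : ℕ) ≤ k)).card = S := hS.symm
      have hc2 : (Finset.univ.filter (fun i => ¬(1 ≤ (v i : ℕ) ∧ (v i : ℕ) ≤ k))).card = n - S := by
        omega
      rw [hc1, hc2]
    have hcp := chernoff_pointwise n S hSn hn θ (u S) hθ1 (hu_nonneg S) (hub' S hSn)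
    have hwS : (1 - θ*(u S))/(1 - u S) = wv S := rfl
    rw [hwS] at hcp
    have hstep1 : Real.exp (m * gθ) ≤ Real.exp ((S:ℝ) * gθ) := by
      apply Real.exp_le_exp.mpr
      have hmS : m ≤ (S:ℝ) := le_trans hkm (Nat.cast_le.2 (le_trans hSk le_rfl))
      exact mul_le_mul_of_nonneg_right hmS hgθ0
    have hstep2 : (wv S)^(n-S) ≤ (wv k)^(n-S) :=
      pow_le_pow_left₀ (hwv_nonneg S hSn) (hwv_anti k S hSk hSn) _
    rw [hprod]
    calc Real.exp (m * gθ) ≤ Real.exp ((S:ℝ) * gθ) := hstep1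
      _ ≤ θ^S * (wv S)^(n-S) := hcp
      _ ≤ θ^S * (wv k)^(n-S) := mul_le_mul_of_nonneg_left hstep2 (by positivity)
  -- at most one crossing index
  have hHsum : ∀ v : Fin n → Fin (n+1), ∑ k ∈ K, Hk k v ≤ 1 := by
    intro v
    by_cases hex : ∃ k0 ∈ K, cond k0 v
    · obtain ⟨k0, hk0K, hk0c⟩ := hex
      have huniq : ∀ k ∈ K, k ≠ k0 → Hk k v = 0 := by
        intro k hkK hne
        simp only [hHkdef]
        rw [if_neg]
        intro hc
        rcases lt_or_gt_of_ne hne with hlt | hgt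
        · exact absurd (hk0c.2 k hkK hlt) (not_lt.2 hc.1)
        · exact absurd (hc.2 k0 hk0K hgt) (not_lt.2 hk0c.1)
      calc ∑ k ∈ K, Hk k v = ∑ k ∈ K, if k = k0 then Hk k v else 0 := by
            refine Finset.sum_congr rfl (fun k hk => ?_)
            split_ifs with h
            · rfl
            · exact huniq k hk h
        _ ≤ 1 := by
            rw [Finset.sum_ite_eq' K k0 (fun k => Hk k v)]
            rw [if_pos hk0K]
            simp only [hHkdef]
            split_ifs <;> norm_num
    · push_neg at hex
      have hzero : ∀ k ∈ K, Hk k v = 0 := fun k hk => by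
        simp only [hHkdef]; rw [if_neg (hex k hk)]
      rw [Finset.sum_congr rfl hzero]
      simp
  -- measurability
  have hcellM : Measurable cell := measurable_to_countable' hcellmeas
  set Ak : ℕ → Set Ω := fun k => {ω | cond k (fun i => cell (X i ω))} with hAkdef
  have hAkmeas : ∀ k, MeasurableSet (Ak k) := by
    intro k
    have hAke : Ak k = ⋃ v ∈ Finset.univ.filter (fun v : Fin n → Fin (n+1) => cond k v),
        ⋂ i, X i ⁻¹' (cell ⁻¹' {v i}) := by
      ext ω
      simp only [hAkdef, Set.mem_setOf_eq, Set.mem_iUnion, Finset.mem_filter, Finset.mem_univ,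
        true_and, Set.mem_iInter, Set.mem_preimage, Set.mem_singleton_iff]
      constructor
      · intro h
        exact ⟨_, h, fun i => rfl⟩
      · rintro ⟨v, hv, hveq⟩
        have : (fun i => cell (X i ω)) = v := funext hveq
        rw [this]
        exact hv
    rw [hAke]
    refine Set.Finite.measurableSet_biUnion (Finset.finite_toSet _) ?_
    intro v _
    exact MeasurableSet.iInter (fun i => (hmeas i) (hcellmeas (v i)))
  -- expressing P (Ak k) as a sum
  have hPAk : ∀ k : ℕ, (P (Ak k)).toReal = ∑ v : Fin n → Fin (n+1), Hk k v * ∏ i, rc (v i) := by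
    intro k
    have h1 := aux_prod_integral P n X hmeas hiid cell hcellmeas (fun _ => (1:ℝ)) (Hk k)
    simp only [Finset.prod_const, one_pow, one_mul] at h1
    have h2 : (fun ω => Hk k (fun i => cell (X i ω))) = (Ak k).indicator (fun _ => (1:ℝ)) := by
      funext ω
      simp only [hHkdef, hAkdef, Set.indicator_apply, Set.mem_setOf_eq]
    rw [h2, integral_indicator_const _ (hAkmeas k)] at h1
    simp only [smul_eq_mul, mul_one] at h1
    rw [← measureReal_def, h1]
    refine Finset.sum_congr rfl (fun v _ => ?_)
    congr 1
    refine Finset.prod_congr rfl (fun i _ => ?_)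
    rw [← Measure.map_apply (hmeas i) (hcellmeas (v i)), hlaw i]
  -- key exchange identity
  have hkey : ∀ k ∈ K, ∑ v : Fin n → Fin (n+1), Hk k v * ∏ i, (fw (v i) * rc (v i))
      = ∑ v : Fin n → Fin (n+1), Hk k v * ∏ i, (gw k (v i) * rc (v i)) := by
    intro k hk
    obtain ⟨hk1, hkn, _⟩ := hKfacts k hk
    have h1 : ∀ (Wf : Fin (n+1) → ℝ),
        ∑ v : Fin n → Fin (n+1), Hk k v * ∏ i, (Wf (v i) * rc (v i))
        = ∑ v' : Fin n → Fin (n+1), Hk k v'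
            * ∏ i, (∑ c ∈ Finset.univ.filter (fun c => qk k c = v' i), Wf c * rc c) := by
      intro Wf
      rw [← aux_regroup (qk k) (fun _ c => Wf c * rc c) (Hk k)]
      refine Finset.sum_congr rfl (fun v _ => ?_)
      rw [hHk_inv k hk v]
    rw [h1 fw, h1 (gw k)]
    refine Finset.sum_congr rfl (fun v' _ => ?_)
    congr 1
    refine Finset.prod_congr rfl (fun i _ => ?_)
    exact hfiber k (Finset.mem_Icc.2 ⟨hk1, hkn⟩) (v' i)
  -- covering by first crossing
  have hcover : (⋃ k ∈ K, {ω | k ≤ (Finset.univ.filter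
        (fun i => a < X i ω ∧ X i ω ≤ a + (k:ℝ)/((n:ℝ)*β))).card})
      ⊆ ⋃ k ∈ K, Ak k := by
    intro ω hω
    simp only [Set.mem_iUnion, exists_prop, Set.mem_setOf_eq] at hω
    obtain ⟨k, hkK, hkcard⟩ := hω
    have hcard_cnt : ∀ k' ∈ K, (Finset.univ.filter
        (fun i => a < X i ω ∧ X i ω ≤ a + (k':ℝ)/((n:ℝ)*β))).card
        = cnt k' (fun i => cell (X i ω)) := by
      intro k' hk'
      obtain ⟨h1, h2, _⟩ := hKfacts k' hk'
      simp only [hcntdef]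
      congr 1
      apply Finset.filter_congr
      intro i _
      have h3 := (hcell_Ioc (X i ω) k' h1 h2).symm
      simp only [hsdef] at h3
      exact h3
    set T := K.filter (fun k' => k' ≤ cnt k' (fun i => cell (X i ω))) with hTdef
    have hTne : T.Nonempty := by
      refine ⟨k, ?_⟩
      simp only [hTdef, Finset.mem_filter]
      refine ⟨hkK, ?_⟩
      rw [← hcard_cnt k hkK]
      exact hkcard
    set k0 := T.min' hTne with hk0def
    have hk0T : k0 ∈ T := T.min'_mem hTne
    simp only [hTdef, Finset.mem_filter] at hk0T
    refine Set.mem_biUnion hk0T.1 ?_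
    show cond k0 (fun i => cell (X i ω))
    refine ⟨hk0T.2, ?_⟩
    intro j hjK hjk0
    by_contra hcon
    push_neg at hcon
    have hjT : j ∈ T := by
      simp only [hTdef, Finset.mem_filter]
      exact ⟨hjK, hcon⟩
    have := T.min'_le j hjT
    omega
  refine le_trans (measure_mono hcover) ?_
  refine le_trans (measure_biUnion_finset_le K Ak) ?_
  -- the real-valued chain
  have hfwrc_nonneg : ∀ v : Fin n → Fin (n+1), 0 ≤ ∏ i, (fw (v i) * rc (v i)) :=
    fun v => Finset.prod_nonneg (fun i _ => mul_nonneg (hfw_nonneg _) (hrc_nonneg _))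
  have hsum_le : ∑ k ∈ K, (P (Ak k)).toReal ≤ Real.exp (-(m * gθ)) := by
    have hexpos := Real.exp_pos (m * gθ)
    calc ∑ k ∈ K, (P (Ak k)).toReal
        = ∑ k ∈ K, ∑ v : Fin n → Fin (n+1), Hk k v * ∏ i, rc (v i) :=
          Finset.sum_congr rfl (fun k _ => hPAk k)
      _ ≤ ∑ k ∈ K, ∑ v : Fin n → Fin (n+1),
            Real.exp (-(m*gθ)) * (Hk k v * ∏ i, (gw k (v i) * rc (v i))) := by
          refine Finset.sum_le_sum (fun k hk => Finset.sum_le_sum (fun v _ => ?_))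
          rcases hHk01 k v with h0 | h1
          · rw [h0]; simp
          · have hcondv : cond k v := by
              by_contra hc
              simp only [hHkdef, if_neg hc] at h1
              norm_num at h1
            rw [h1, one_mul, one_mul]
            have hgprod := hF3 k hk v hcondv
            have hrcprod : 0 ≤ ∏ i, rc (v i) :=
              Finset.prod_nonneg (fun i _ => hrc_nonneg _)
            rw [Finset.prod_mul_distrib]
            have h6 : Real.exp (m*gθ) * ∏ i, rc (v i)
                ≤ (∏ i, gw k (v i)) * ∏ i, rc (v i) :=
              mul_le_mul_of_nonneg_right hgprod hrcprod
            rw [Real.exp_neg, inv_mul_eq_div, le_div_iff₀ hexpos]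
            nlinarith [h6]
      _ = Real.exp (-(m*gθ)) * ∑ k ∈ K, ∑ v : Fin n → Fin (n+1),
            Hk k v * ∏ i, (gw k (v i) * rc (v i)) := by
          rw [Finset.mul_sum]
          refine Finset.sum_congr rfl (fun k _ => ?_)
          rw [Finset.mul_sum]
      _ = Real.exp (-(m*gθ)) * ∑ k ∈ K, ∑ v : Fin n → Fin (n+1),
            Hk k v * ∏ i, (fw (v i) * rc (v i)) := by
          congr 1
          exact Finset.sum_congr rfl (fun k hk => (hkey k hk).symm)
      _ = Real.exp (-(m*gθ)) * ∑ v : Fin n → Fin (n+1),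
            (∑ k ∈ K, Hk k v) * ∏ i, (fw (v i) * rc (v i)) := by
          congr 1
          rw [Finset.sum_comm]
          exact Finset.sum_congr rfl (fun v _ => (Finset.sum_mul _ _ _).symm)
      _ ≤ Real.exp (-(m*gθ)) * ∑ v : Fin n → Fin (n+1),
            ∏ i, (fw (v i) * rc (v i)) := by
          refine mul_le_mul_of_nonneg_left ?_ (Real.exp_pos _).le
          refine Finset.sum_le_sum (fun v _ => ?_)
          calc (∑ k ∈ K, Hk k v) * ∏ i, (fw (v i) * rc (v i))
              ≤ 1 * ∏ i, (fw (v i) * rc (v i)) :=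
                mul_le_mul_of_nonneg_right (hHsum v) (hfwrc_nonneg v)
            _ = ∏ i, (fw (v i) * rc (v i)) := one_mul _
      _ = Real.exp (-(m*gθ)) := by
          have hps := Finset.prod_univ_sum (fun _ : Fin n => (Finset.univ : Finset (Fin (n+1))))
            (fun _ c => fw c * rc c)
          rw [Fintype.piFinset_univ] at hps
          rw [← hps, Finset.prod_eq_one (fun (i : Fin n) _ => hptotal)]
          simp
  calc ∑ k ∈ K, P (Ak k) = ENNReal.ofReal (∑ k ∈ K, (P (Ak k)).toReal) := by
        rw [ENNReal.ofReal_sum_of_nonneg (fun k _ => ENNReal.toReal_nonneg)]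
        exact Finset.sum_congr rfl (fun k _ => (ENNReal.ofReal_toReal (measure_ne_top P _)).symm)
    _ ≤ ENNReal.ofReal (Real.exp (-(m * gθ))) := ENNReal.ofReal_le_ofReal hsum_le
set_option maxHeartbeats 2000000 in
/-- upper-tail exponential bound for the Grenander estimator on a flat part. -/
theorem grenander_flat_upper_tail_bound
    {Ω : Type*} [MeasurableSpace Ω] (P : Measure Ω) [IsProbabilityMeasure P]
    (n : ℕ) (hn : 0 < n)
    (f0 : ℝ → ℝ) (hdec : AntitoneOn f0 (Icc 0 1)) (hnn : ∀ y, 0 ≤ f0 y)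
    (hsupp : ∀ y, y ∉ Icc (0:ℝ) 1 → f0 y = 0)
    (a b x : ℝ) (ha : 0 ≤ a) (hab : a < b) (hb : b ≤ 1) (hx : x ∈ Ioo a b)
    (hflat : ∀ y ∈ Ioc a b, f0 y = f0 b)
    (X : Fin n → Ω → ℝ) (hmeas : ∀ i, Measurable (X i))
    (hiid : iIndepFun X P)
    (hlaw : ∀ i, Measure.map (X i) P =
      MeasureTheory.volume.withDensity (fun y => ENNReal.ofReal (f0 y)))
    (t0 k0 c0 : ℝ) (ht0 : 0 < t0) (hk0 : 0 < k0)
    (hc0 : c0 = t0 / (f0 b + t0 / k0))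
    (hnk : (k0 / 3) ^ 2 ≤ (n : ℝ)) :
    ∀ t : ℝ, t0 ≤ t →
      P {ω | f0 x + t / Real.sqrt n < grenEst (empCDF n (fun i => X i ω)) x} ≤
        ENNReal.ofReal (Real.exp (-(c0 * (t * (x - a))) / 2)) := by
  classical
  intro t ht
  have hn0 : (0:ℝ) < n := Nat.cast_pos.2 hn
  have hsq : 0 < Real.sqrt n := Real.sqrt_pos.2 hn0
  have hf0b : 0 ≤ f0 b := hnn b
  have hxa : 0 < x - a := sub_pos.2 hx.1
  have ht' : 0 < t := lt_of_lt_of_le ht0 ht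
  set β : ℝ := f0 b + t / Real.sqrt n with hβdef
  have hβ : 0 < β := add_pos_of_nonneg_of_pos hf0b (div_pos ht' hsq)
  have hnβ : (0:ℝ) < (n:ℝ)*β := by positivity
  have hf0x : f0 x = f0 b := hflat x ⟨hx.1, hx.2.le⟩
  set m : ℝ := (n:ℝ)*β*(x-a) with hmdef
  have hm : 0 < m := by positivity
  -- STEP 1 : deterministic inclusion into crossing events
  have hstep1 : {ω | f0 x + t / Real.sqrt n < grenEst (empCDF n (fun i => X i ω)) x}
      ⊆ ⋃ k ∈ (Finset.Icc 1 n).filter (fun k : ℕ => m ≤ (k:ℝ)),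
        {ω | k ≤ (Finset.univ.filter
          (fun i => a < X i ω ∧ X i ω ≤ a + (k:ℝ)/((n:ℝ)*β))).card} := by
    intro ω hω
    simp only [Set.mem_setOf_eq] at hω
    rw [hf0x, ← hβdef] at hω
    set C : Finset ℝ := insert 0 ((Finset.univ.image (fun i => X i ω)).filter
      (fun c => 0 ≤ c)) with hCdef
    have hC0 : (0:ℝ) ∈ C := Finset.mem_insert_self _ _
    have hCnn : ∀ c ∈ C, 0 ≤ c := by
      intro c hc
      rcases Finset.mem_insert.1 hc with h | h
      · rw [h]
      · exact (Finset.mem_filter.1 h).2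
    have hcand : ∀ y : ℝ, 0 ≤ y → ∃ c ∈ C, c ≤ y ∧
        empCDF n (fun i => X i ω) y = empCDF n (fun i => X i ω) c := by
      intro y hy
      set D := C.filter (fun c => c ≤ y) with hDdef
      have hDne : D.Nonempty := ⟨0, by
        simp only [hDdef, Finset.mem_filter]; exact ⟨hC0, hy⟩⟩
      set c := D.max' hDne with hcdef
      have hcD : c ∈ D := D.max'_mem hDne
      simp only [hDdef, Finset.mem_filter] at hcD
      refine ⟨c, hcD.1, hcD.2, ?_⟩
      unfold empCDF
      congr 1
      apply Finset.sum_congr rfl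
      intro i _
      have hiff : X i ω ≤ y ↔ X i ω ≤ c := by
        constructor
        · intro hXy
          by_contra hXc
          push_neg at hXc
          have hX0 : 0 ≤ X i ω := le_trans (hCnn c hcD.1) hXc.le
          have hXC : X i ω ∈ C := Finset.mem_insert_of_mem
            (Finset.mem_filter.2 ⟨Finset.mem_image_of_mem _ (Finset.mem_univ i), hX0⟩)
          have hXD : X i ω ∈ D := by
            simp only [hDdef, Finset.mem_filter]; exact ⟨hXC, hXy⟩
          have := D.le_max' _ hXD
          rw [← hcdef] at this
          linarith
        · intro h; exact le_trans h hcD.2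
      rw [if_congr hiff rfl rfl]
    obtain ⟨s', hxs', hineq⟩ := grenPartI (empCDF n (fun i => X i ω)) C hC0 hCnn hcand
      a x β ha hx.1 hβ hω
    set k := (Finset.univ.filter (fun i => a < X i ω ∧ X i ω ≤ s')).card with hkdef
    have has' : a < s' := lt_of_lt_of_le hx.1 (le_trans le_rfl hxs')
    have hcount : empCDF n (fun i => X i ω) s' - empCDF n (fun i => X i ω) a = (k:ℝ)/(n:ℝ) := by
      unfold empCDF
      have hsub : (∑ i, if X i ω ≤ s' then (1:ℝ) else 0)
          - (∑ i, if X i ω ≤ a then (1:ℝ) else 0) = (k:ℝ) := by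
        rw [← Finset.sum_sub_distrib]
        have hterm : ∀ i : Fin n, (if X i ω ≤ s' then (1:ℝ) else 0)
            - (if X i ω ≤ a then (1:ℝ) else 0)
            = if a < X i ω ∧ X i ω ≤ s' then (1:ℝ) else 0 := by
          intro i
          by_cases h1 : X i ω ≤ a
          · rw [if_pos (le_trans h1 (le_trans has'.le le_rfl)), if_pos h1,
              if_neg (fun hc => absurd hc.1 (not_lt.2 h1))]
            norm_num
          · push_neg at h1
            by_cases h2 : X i ω ≤ s'
            · rw [if_pos h2, if_neg (not_le.2 h1), if_pos ⟨h1, h2⟩]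
              norm_num
            · rw [if_neg h2, if_neg (not_le.2 h1), if_neg (fun hc => h2 hc.2)]
              norm_num
        rw [Finset.sum_congr rfl (fun i _ => hterm i)]
        rw [Finset.sum_boole]
      rw [← mul_sub, hsub]
      rw [div_eq_inv_mul]
    rw [hcount] at hineq
    have hknβ : (n:ℝ)*β*(s'-a) ≤ (k:ℝ) := by
      rw [le_div_iff₀ hn0] at hineq
      nlinarith [hineq]
    have hkm : m ≤ (k:ℝ) := by
      refine le_trans ?_ hknβ
      rw [hmdef]
      nlinarith [hβ, hxs', hn0]
    have hk1 : 1 ≤ k := by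
      by_contra hcon
      push_neg at hcon
      have hk0' : k = 0 := by omega
      rw [hk0'] at hkm
      simp at hkm
      nlinarith [hm]
    have hkn : k ≤ n := by
      refine le_trans (Finset.card_filter_le _ _) ?_
      simp
    have hs'k : s' ≤ a + (k:ℝ)/((n:ℝ)*β) := by
      rw [← sub_le_iff_le_add']
      rw [le_div_iff₀ hnβ]
      nlinarith [hknβ]
    simp only [Set.mem_iUnion, exists_prop, Set.mem_setOf_eq]
    refine ⟨k, ?_, ?_⟩
    · simp only [Finset.mem_filter, Finset.mem_Icc]
      exact ⟨⟨hk1, hkn⟩, hkm⟩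
    · refine le_trans (le_of_eq hkdef) (Finset.card_le_card ?_)
      intro i hi
      simp only [Finset.mem_filter, Finset.mem_univ, true_and] at hi ⊢
      exact ⟨hi.1, le_trans hi.2 hs'k⟩
  -- density bound to the right of a
  have hf0le : ∀ y : ℝ, a < y → f0 y ≤ f0 b := by
    intro y hy
    by_cases hyb : y ≤ b
    · rw [hflat y ⟨hy, hyb⟩]
    · push_neg at hyb
      by_cases hy1 : y ≤ 1
      · exact hdec ⟨le_trans ha hab.le, hb⟩ ⟨le_trans ha (le_trans hab.le hyb.le), hy1⟩ hyb.le
      · push_neg at hy1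
        rw [hsupp y (by simp only [Set.mem_Icc, not_and_or, not_le]; right; exact hy1)]
        exact hf0b
  by_cases hf0b0 : f0 b = 0
  · -- degenerate case : no mass to the right of a
    have hplaw : ∀ i : Fin n, P (X i ⁻¹' (Ioi a)) = 0 := by
      intro i
      rw [← Measure.map_apply (hmeas i) measurableSet_Ioi, hlaw i]
      rw [withDensity_apply _ measurableSet_Ioi]
      have hz : ∀ y ∈ Ioi a, ENNReal.ofReal (f0 y) = 0 := by
        intro y hy
        refine ENNReal.ofReal_eq_zero.2 ?_
        rw [← hf0b0]
        exact hf0le y hy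
      calc ∫⁻ y in Ioi a, ENNReal.ofReal (f0 y)
          = ∫⁻ y in Ioi a, 0 := by
            apply setLIntegral_congr_fun measurableSet_Ioi
            exact hz
        _ = 0 := by simp
    have hnull : P (⋃ k ∈ (Finset.Icc 1 n).filter (fun k : ℕ => m ≤ (k:ℝ)),
        {ω | k ≤ (Finset.univ.filter
          (fun i => a < X i ω ∧ X i ω ≤ a + (k:ℝ)/((n:ℝ)*β))).card}) = 0 := by
      apply measure_mono_null (t := ⋃ i : Fin n, X i ⁻¹' (Ioi a))
      · intro ω hω
        simp only [Set.mem_iUnion, exists_prop, Set.mem_setOf_eq, Finset.mem_filter,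
          Finset.mem_Icc] at hω
        obtain ⟨k, ⟨⟨hk1, _⟩, _⟩, hcard⟩ := hω
        have hpos : 0 < (Finset.univ.filter
            (fun i => a < X i ω ∧ X i ω ≤ a + (k:ℝ)/((n:ℝ)*β))).card := by omega
        obtain ⟨i, hi⟩ := Finset.card_pos.1 hpos
        simp only [Finset.mem_filter, Finset.mem_univ, true_and] at hi
        exact Set.mem_iUnion.2 ⟨i, hi.1⟩
      · exact measure_iUnion_null hplaw
    calc P {ω | f0 x + t / Real.sqrt n < grenEst (empCDF n (fun i => X i ω)) x}
        ≤ 0 := le_trans (measure_mono hstep1) (le_of_eq hnull)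
      _ ≤ _ := by simp
  · -- main case
    have hf0bpos : 0 < f0 b := lt_of_le_of_ne hf0b (Ne.symm hf0b0)
    set ν := MeasureTheory.volume.withDensity (fun y => ENNReal.ofReal (f0 y)) with hνdef
    have hνprob : IsProbabilityMeasure ν := by
      have h1 : IsProbabilityMeasure (Measure.map (X ⟨0, hn⟩) P) :=
        Measure.isProbabilityMeasure_map (hmeas ⟨0, hn⟩).aemeasurable
      rwa [hlaw ⟨0, hn⟩] at h1
    set θ : ℝ := β / f0 b with hθdef
    have hθ1 : 1 < θ := by
      rw [hθdef, lt_div_iff₀ hf0bpos, one_mul, hβdef]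
      have := div_pos ht' hsq
      linarith
    have hθ0 : 0 < θ := by linarith
    have hub : ∀ j : ℕ, j ≤ n →
        ν (Ioc a (a + (j:ℝ)/((n:ℝ)*β))) ≤ ENNReal.ofReal ((j:ℝ)/((n:ℝ)*θ)) := by
      intro j hj
      rw [hνdef, withDensity_apply _ measurableSet_Ioc]
      have hb1 : ∫⁻ y in Ioc a (a + (j:ℝ)/((n:ℝ)*β)), ENNReal.ofReal (f0 y)
          ≤ ∫⁻ _ in Ioc a (a + (j:ℝ)/((n:ℝ)*β)), ENNReal.ofReal (f0 b) := by
        apply setLIntegral_mono measurable_const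
        intro y hy
        exact ENNReal.ofReal_le_ofReal (hf0le y hy.1)
      refine le_trans hb1 ?_
      rw [setLIntegral_const, Real.volume_Ioc]
      have hlen : a + (j:ℝ)/((n:ℝ)*β) - a = (j:ℝ)/((n:ℝ)*β) := by ring
      rw [hlen, ← ENNReal.ofReal_mul hf0b]
      apply ENNReal.ofReal_le_ofReal
      apply le_of_eq
      rw [hθdef]
      field_simp
    have hmain := mainBound P n hn X hmeas hiid ν hlaw a β θ hθ1 hβ hub m hm.le
    refine le_trans (le_trans (measure_mono hstep1) hmain) ?_
    apply ENNReal.ofReal_le_ofReal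
    apply Real.exp_le_exp.mpr
    rw [show -(c0 * (t * (x - a))) / 2 = -((c0 * (t * (x - a)))/2) from by ring]
    rw [neg_le_neg_iff]
    -- arithmetic
    set r := Real.sqrt n with hrdef
    have hr2 : r^2 = (n:ℝ) := Real.sq_sqrt hn0.le
    set l : ℝ := t / (r * f0 b) with hldef
    have hl0 : 0 < l := by positivity
    have hθl : θ = 1 + l := by
      rw [hθdef, hβdef, hldef]
      field_simp
    have hβl : β = f0 b * (1+l) := by
      rw [hβdef, hldef]
      field_simp
    have hA := A_nonneg l hl0.le
    set hfn : ℝ := (1+l) * Real.log (1+l) - l with hhdef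
    have hhpos : 0 ≤ hfn := by nlinarith [hA, hl0]
    have hgid : m * (Real.log θ - 1 + 1/θ) = (n:ℝ)*(f0 b)*(x-a) * hfn := by
      rw [hmdef, hθl, hβl, hhdef]
      have h1l : (0:ℝ) < 1 + l := by linarith
      field_simp
      ring
    rw [hgid]
    -- k0 ≤ 3 * sqrt n
    have hsq2 : k0/3 ≤ r := by
      rw [hrdef]
      exact Real.le_sqrt_of_sq_le hnk
    have hnfl : (n:ℝ) * f0 b * l^2 = t^2 / f0 b := by
      rw [hldef, ← hr2]
      field_simp
    -- main chain
    have hd1 : (0:ℝ) < f0 b + t/k0 := by positivity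
    have hq1 : c0 ≤ t/(f0 b + t/k0) := by
      rw [hc0, div_le_div_iff₀ (by positivity) hd1]
      have : t0 * (t/k0) ≤ t * (t0/k0) := by
        rw [div_eq_inv_mul, div_eq_inv_mul]
        ring_nf
        nlinarith [ht']
      nlinarith [ht0, ht, hf0b]
    have hq2 : c0 * (t*(x-a))/2 ≤ t^2*(x-a)/(2*(f0 b + t/k0)) := by
      have h5 := mul_le_mul_of_nonneg_right hq1 (by positivity : (0:ℝ) ≤ t*(x-a)/2)
      calc c0 * (t*(x-a))/2 = c0 * (t*(x-a)/2) := by ring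
        _ ≤ t/(f0 b + t/k0) * (t*(x-a)/2) := h5
        _ = t^2*(x-a)/(2*(f0 b + t/k0)) := by
            field_simp
    have hq3den : (0:ℝ) < 2*f0 b + 2*(t/(3*r)) := by positivity
    have hq3 : t^2*(x-a)/(2*(f0 b + t/k0)) ≤ t^2*(x-a)/(2*f0 b + 2*(t/(3*r))) := by
      apply div_le_div_of_nonneg_left (by positivity) hq3den
      have h6 : t/(3*r) ≤ t/k0 := by
        apply div_le_div_of_nonneg_left ht'.le hk0
        linarith
      linarith
    have hq4 : t^2*(x-a)/(2*f0 b + 2*(t/(3*r))) ≤ (n:ℝ)*(f0 b)*(x-a) * hfn := by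
      have hden_eq : 2*f0 b + 2*(t/(3*r)) = f0 b * (2 + 2*l/3) := by
        rw [hldef]
        field_simp
      rw [hden_eq]
      rw [div_le_iff₀ (by positivity)]
      have h8 : (n:ℝ)*f0 b^2*(x-a) * l^2 ≤ (n:ℝ)*f0 b^2*(x-a) * ((2+2*l/3)*hfn) :=
        mul_le_mul_of_nonneg_left hA (by positivity)
      have h9 : (n:ℝ)*f0 b^2*(x-a)*l^2 = t^2*(x-a) := by
        have h10 := hnfl
        field_simp at h10
        linear_combination (x-a) * h10
      calc t^2*(x-a) = (n:ℝ)*f0 b^2*(x-a)*l^2 := h9.symm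
        _ ≤ (n:ℝ)*f0 b^2*(x-a) * ((2+2*l/3)*hfn) := h8
        _ = (n:ℝ)*(f0 b)*(x-a) * hfn * (f0 b * (2 + 2*l/3)) := by ring
    calc c0 * (t*(x-a))/2 ≤ t^2*(x-a)/(2*(f0 b + t/k0)) := hq2
      _ ≤ t^2*(x-a)/(2*f0 b + 2*(t/(3*r))) := hq3
      _ ≤ (n:ℝ)*(f0 b)*(x-a) * hfn := hq4
end
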